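/- arXiv:math/0304119 — 2 statements merged into one kernel-verified Lean document; each statement's English description precedes it below -/
import Mathlib

section
/- Let B be a standard one-dimensional Brownian motion. For any x > 0 and t > 0, the probability that the maximum of B over [0,t] exceeds x equals twice the probability that B(t) exceeds x (the reflection principle). -/
open MeasureTheory ProbabilityTheory Set

noncomputable section

/-- A standard one-dimensional Brownian motion: starts at `0`, has continuous
paths, Gaussian increments with variance `t - s`, and independent increments. -/
def IsStandardBM {Ω : Type*} [MeasureSpace Ω] (B : ℝ → Ω → ℝ) : Prop :=
  (∀ ω, B 0 ω = 0) ∧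
  (∀ ω, Continuous fun t => B t ω) ∧
  (∀ t, Measurable (B t)) ∧
  (∀ s t : ℝ, 0 ≤ s → s ≤ t →
    Measure.map (fun ω => B t ω - B s ω) (volume : Measure Ω) =
      gaussianReal 0 (Real.toNNReal (t - s))) ∧
  (∀ (n : ℕ) (t : Fin (n + 1) → ℝ), Monotone t → (∀ i, 0 ≤ t i) →
    iIndepFun
      (fun i : Fin n => fun ω => B (t i.succ) ω - B (t i.castSucc) ω)
      (volume : Measure Ω))

namespace RefPf

def gr (t : ℝ) (n k : ℕ) : ℝ := (k : ℝ) * t / n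

variable {Ω : Type*} [MeasureSpace Ω] [IsProbabilityMeasure (volume : Measure Ω)]
  {B : ℝ → Ω → ℝ} {x t : ℝ}

lemma gr_nonneg (ht : 0 < t) (n k : ℕ) : 0 ≤ gr t n k := by
  unfold gr; positivity

lemma gr_zero (n : ℕ) : gr t n 0 = 0 := by simp [gr]

lemma gr_mono (ht : 0 < t) (n : ℕ) {j k : ℕ} (h : j ≤ k) : gr t n j ≤ gr t n k := by
  unfold gr
  gcongr

lemma gr_le (ht : 0 < t) {n k : ℕ} (hn : n ≠ 0) (h : k ≤ n) : gr t n k ≤ t := by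
  unfold gr
  rw [div_le_iff₀ (by positivity : (0:ℝ) < n)]
  calc (k:ℝ) * t ≤ n * t := by gcongr
    _ = t * n := mul_comm _ _

lemma gr_last {n : ℕ} (hn : n ≠ 0) : gr t n n = t := by
  unfold gr
  rw [mul_comm, mul_div_assoc, div_self (Nat.cast_ne_zero.mpr hn), mul_one]

lemma sum_incr (hB : IsStandardBM B) {n : ℕ} (ω : Ω) {j : ℕ} (hj : j ≤ n) :
    ∑ i ∈ Finset.univ.filter (fun i : Fin n => i.1 < j),
      (B (gr t n (i.1+1)) ω - B (gr t n i.1) ω) = B (gr t n j) ω := by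
  rw [Finset.sum_filter,
    Fin.sum_univ_eq_sum_range (fun i => if i < j then B (gr t n (i+1)) ω - B (gr t n i) ω else 0),
    ← Finset.sum_filter]
  have : (Finset.range n).filter (· < j) = Finset.range j := by
    ext i; simp [Finset.mem_filter]; omega
  rw [this, Finset.sum_range_sub (fun i => B (gr t n i) ω), gr_zero, hB.1, sub_zero]

/-- The joint independence: the vector of grid values up to `k` is independent of the
terminal increment `B t - B (gr t n k)`. -/
lemma indep_Z_Y (hB : IsStandardBM B) (ht : 0 < t) {n k : ℕ} (hn : n ≠ 0) (hk : k ≤ n) :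
    IndepFun (fun ω (j : Fin (k+1)) => B (gr t n j.1) ω)
      (fun ω => B t ω - B (gr t n k) ω) (volume : Measure Ω) := by
  classical
  set g : Fin (n+1) → ℝ := fun i => gr t n i.1 with hg
  have hgmono : Monotone g := fun i j hij => gr_mono ht n (by exact_mod_cast hij)
  have hgpos : ∀ i, 0 ≤ g i := fun i => gr_nonneg ht n i.1
  have hInd := hB.2.2.2.2 n g hgmono hgpos
  set D : Fin n → Ω → ℝ := fun i ω => B (g i.succ) ω - B (g i.castSucc) ω with hD
  have hDmeas : ∀ i, Measurable (D i) := fun i => (hB.2.2.1 _).sub (hB.2.2.1 _)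
  set Sf : Finset (Fin n) := Finset.univ.filter (fun i => i.1 < k) with hSf
  set Tf : Finset (Fin n) := Finset.univ.filter (fun i => k ≤ i.1) with hTf
  have hdisj : Disjoint Sf Tf := by
    rw [Finset.disjoint_left]
    intro a ha hb
    simp [hSf, hTf] at ha hb; omega
  have h2 := hInd.indepFun_finset Sf Tf hdisj hDmeas
  -- φ, ψ
  set φ : (Sf → ℝ) → (Fin (k+1) → ℝ) :=
    fun v j => ∑ i : Sf, (if (i : Fin n).1 < j.1 then v i else 0) with hφ
  set ψ : (Tf → ℝ) → ℝ := fun v => ∑ i : Tf, v i with hψ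
  have hφmeas : Measurable φ := by
    refine measurable_pi_lambda _ (fun j => ?_)
    refine Finset.measurable_sum _ (fun i _ => ?_)
    by_cases h : (i : Fin n).1 < j.1 <;> simp [h]
    exact measurable_pi_apply _
  have hψmeas : Measurable ψ := Finset.measurable_sum _ (fun i _ => measurable_pi_apply _)
  have key := (h2.comp hφmeas hψmeas)
  have e1 : (φ ∘ fun ω (i : Sf) => D i ω) = fun ω (j : Fin (k+1)) => B (gr t n j.1) ω := by
    funext ω j
    simp only [Function.comp_apply, hφ]
    rw [Finset.sum_coe_sort Sf (fun i => if i.1 < j.1 then D i ω else 0), ← Finset.sum_filter]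
    have hfil : Sf.filter (fun i : Fin n => i.1 < j.1)
        = Finset.univ.filter (fun i : Fin n => i.1 < j.1) := by
      rw [hSf, Finset.filter_filter]
      apply Finset.filter_congr
      intro i _
      have := j.2
      omega
    rw [hfil]
    have := sum_incr (t := t) hB ω (le_trans (Nat.lt_succ_iff.mp j.2) hk)
    rw [← this]
    apply Finset.sum_congr rfl
    intro i _
    simp [hD, hg, Fin.val_succ, Fin.coe_castSucc]
  have e2 : (ψ ∘ fun ω (i : Tf) => D i ω) = fun ω => B t ω - B (gr t n k) ω := by
    funext ω
    simp only [Function.comp_apply, hψ]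
    rw [Finset.sum_coe_sort Tf (fun i => D i ω)]
    have hsplit := Finset.sum_filter_add_sum_filter_not Finset.univ
      (fun i : Fin n => i.1 < k) (fun i => D i ω)
    have hTf' : Finset.univ.filter (fun i : Fin n => ¬ i.1 < k) = Tf := by
      rw [hTf]; apply Finset.filter_congr; intro i _; omega
    rw [hTf'] at hsplit
    have huniv : ∑ i : Fin n, D i ω = B (gr t n n) ω := by
      have hfil : Finset.univ.filter (fun i : Fin n => i.1 < n) = Finset.univ := by
        apply Finset.filter_true_of_mem; intro i _; exact i.2
      rw [← sum_incr (t := t) hB ω (le_refl n), hfil]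
      apply Finset.sum_congr rfl
      intro i _
      simp [hD, hg, Fin.val_succ, Fin.coe_castSucc]
    have hS : ∑ i ∈ Sf, D i ω = B (gr t n k) ω := by
      rw [← sum_incr (t := t) hB ω hk, hSf]
      apply Finset.sum_congr rfl
      intro i _
      simp [hD, hg, Fin.val_succ, Fin.coe_castSucc]
    rw [hS, huniv] at hsplit
    rw [gr_last hn] at hsplit
    linarith [hsplit]
  rw [e1, e2] at key
  exact key

/-- law of terminal increment -/
lemma law_Y (hB : IsStandardBM B) (ht : 0 < t) {n k : ℕ} (hn : n ≠ 0) (hk : k ≤ n) :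
    Measure.map (fun ω => B t ω - B (gr t n k) ω) (volume : Measure Ω)
      = gaussianReal 0 (Real.toNNReal (t - gr t n k)) :=
  hB.2.2.2.1 (gr t n k) t (gr_nonneg ht n k) (gr_le ht hn hk)

lemma law_Bt (hB : IsStandardBM B) (ht : 0 < t) :
    Measure.map (fun ω => B t ω) (volume : Measure Ω)
      = gaussianReal 0 (Real.toNNReal t) := by
  have h := hB.2.2.2.1 0 t le_rfl ht.le
  have : (fun ω => B t ω - B 0 ω) = fun ω => B t ω := by
    funext ω; rw [hB.1, sub_zero]
  rw [this, sub_zero] at h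
  exact h

def Aset {Ω : Type*} (B : ℝ → Ω → ℝ) (x t : ℝ) (n k : ℕ) : Set Ω :=
  {ω | x < B (gr t n k) ω ∧ ∀ j < k, B (gr t n j) ω ≤ x}

def Eset {Ω : Type*} (B : ℝ → Ω → ℝ) (x t : ℝ) (n : ℕ) : Set Ω :=
  {ω | ∃ k ≤ n, x < B (gr t n k) ω}

def Oset {Ω : Type*} (B : ℝ → Ω → ℝ) (x t : ℝ) (n : ℕ) (ε : ℝ) : Set Ω :=
  ⋃ k ∈ Finset.range (n+1), (Aset B x t n k ∩ {ω | x + ε < B (gr t n k) ω})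

def Fset (x : ℝ) (k : ℕ) : Set (Fin (k+1) → ℝ) :=
  {u | x < u (Fin.last k)} ∩ ⋂ (j : Fin (k+1)) (_ : j.1 < k), {u | u j ≤ x}

lemma meas_A (hB : IsStandardBM B) (n k : ℕ) : MeasurableSet (Aset B x t n k) := by
  have : Aset B x t n k = {ω | x < B (gr t n k) ω} ∩ ⋂ (j : ℕ) (_ : j < k), {ω | B (gr t n j) ω ≤ x} := by
    ext ω; simp [Aset]
  rw [this]
  exact (measurableSet_lt measurable_const (hB.2.2.1 _)).inter
    (MeasurableSet.iInter fun j => MeasurableSet.iInter fun _ =>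
      measurableSet_le (hB.2.2.1 _) measurable_const)

lemma meas_F (x : ℝ) (k : ℕ) : MeasurableSet (Fset x k) :=
  (measurableSet_lt measurable_const (measurable_pi_apply _)).inter
    (MeasurableSet.iInter fun j => MeasurableSet.iInter fun _ =>
      measurableSet_le (measurable_pi_apply _) measurable_const)

lemma A_pre (n k : ℕ) :
    Aset B x t n k = (fun ω (j : Fin (k+1)) => B (gr t n j.1) ω) ⁻¹' (Fset x k) := by
  ext ω
  simp only [Aset, Fset, mem_setOf_eq, mem_preimage, mem_inter_iff, mem_iInter, Fin.val_last]
  constructor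
  · rintro ⟨h1, h2⟩
    exact ⟨h1, fun j hj => h2 j.1 hj⟩
  · rintro ⟨h1, h2⟩
    exact ⟨h1, fun j hj => h2 ⟨j, by omega⟩ hj⟩

lemma A_disj (j k : ℕ) (h : j < k) : Disjoint (Aset B x t n j) (Aset B x t n k) := by
  rw [Set.disjoint_left]
  rintro ω ⟨h1, _⟩ ⟨_, h2⟩
  exact absurd h1 (not_lt.mpr (h2 j h))

lemma E_eq_union (n : ℕ) : Eset B x t n = ⋃ k ∈ Finset.range (n+1), Aset B x t n k := by
  ext ω
  simp only [Eset, mem_setOf_eq, mem_iUnion, Finset.mem_range, exists_prop]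
  constructor
  · rintro ⟨k, hk, hxk⟩
    have hex : ∃ m, x < B (gr t n m) ω := ⟨k, hxk⟩
    refine ⟨Nat.find hex, ?_, Nat.find_spec hex, fun j hj => ?_⟩
    · have := Nat.find_min' hex hxk; omega
    · exact not_lt.mp (Nat.find_min hex hj)
  · rintro ⟨k, hk, h1, _⟩
    exact ⟨k, by omega, h1⟩

lemma gr_lt (ht : 0 < t) {n k : ℕ} (hn : n ≠ 0) (hk : k < n) : gr t n k < t := by
  have h0 : (0:ℝ) < n := by positivity
  have hkn : (k:ℝ) < n := by exact_mod_cast hk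
  unfold gr
  rw [div_lt_iff₀ h0]
  nlinarith

lemma gauss_symm (v : NNReal) (a : ℝ) :
    gaussianReal 0 v (Iio a) = gaussianReal 0 v (Ioi (-a)) := by
  have h := gaussianReal_map_const_mul (μ := 0) (v := v) (-1)
  have hv : (NNReal.mk ((-1:ℝ)^2) (sq_nonneg _) * v : NNReal) = v := by apply NNReal.eq; simp
  rw [hv, mul_zero] at h
  have hm : Measurable (fun y : ℝ => (-1) * y) := measurable_const_mul _
  calc gaussianReal 0 v (Iio a) = ((gaussianReal 0 v).map ((-1 : ℝ) * ·)) (Iio a) := by rw [h]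
    _ = gaussianReal 0 v (((-1 : ℝ) * ·) ⁻¹' (Iio a)) := Measure.map_apply hm measurableSet_Iio
    _ = gaussianReal 0 v (Ioi (-a)) := by congr 1; ext y; simp [neg_lt]

lemma gauss_atom {v : NNReal} (hv : v ≠ 0) (a : ℝ) : gaussianReal 0 v {a} = 0 := by
  rw [gaussianReal_of_var_ne_zero _ hv, withDensity_apply _ (measurableSet_singleton a),
    setLIntegral_measure_zero _ _ (Real.volume_singleton)]

/-- key upper-bound identity for `k < n` -/
lemma upper_k (hB : IsStandardBM B) (ht : 0 < t) {n k : ℕ} (hn : n ≠ 0) (hk : k < n) :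
    volume (Aset B x t n k)
      = 2 * volume (Aset B x t n k ∩ {ω | 0 < B t ω - B (gr t n k) ω}) := by
  set Y : Ω → ℝ := fun ω => B t ω - B (gr t n k) ω with hY
  set ν := gaussianReal 0 (Real.toNNReal (t - gr t n k)) with hν
  have hνne : Real.toNNReal (t - gr t n k) ≠ 0 := by
    rw [← NNReal.coe_ne_zero, Real.coe_toNNReal _ (by linarith [gr_lt ht hn hk])]
    have := gr_lt ht hn hk; intro hcon; linarith
  have hIndep := indep_Z_Y hB ht hn hk.le
  have hYmeas : Measurable Y := (hB.2.2.1 t).sub (hB.2.2.1 _)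
  have hprod : ∀ C : Set ℝ, MeasurableSet C →
      volume (Aset B x t n k ∩ Y ⁻¹' C) = volume (Aset B x t n k) * ν C := by
    intro C hC
    rw [A_pre]
    rw [hIndep.measure_inter_preimage_eq_mul _ _ (meas_F x k) hC]
    congr 1
    rw [hν, ← law_Y hB ht hn hk.le, Measure.map_apply hYmeas hC]
  have hsymm : ν (Iio 0) = ν (Ioi 0) := by
    have := gauss_symm (Real.toNNReal (t - gr t n k)) 0
    rwa [neg_zero] at this
  have hunion : volume (Aset B x t n k)
      = volume (Aset B x t n k) * (ν (Iio 0) + ν {0} + ν (Ioi 0)) := by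
    have h1 : ν (Iio 0) + ν {0} + ν (Ioi 0) = 1 := by
      have hIic : ν (Iic 0) = ν (Iio 0) + ν {0} := by
        rw [← Iio_union_right, measure_union (by simp) (measurableSet_singleton 0)]
      have : ν (Iic 0) + ν (Ioi 0) = ν univ := by
        rw [← measure_add_measure_compl measurableSet_Iic, compl_Iic]
      rw [← hIic, this, measure_univ]
    rw [h1, mul_one]
  calc volume (Aset B x t n k)
      = volume (Aset B x t n k) * (ν (Iio 0) + ν {0} + ν (Ioi 0)) := hunion
    _ = volume (Aset B x t n k) * ν (Iio 0) + volume (Aset B x t n k) * ν {0}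
        + volume (Aset B x t n k) * ν (Ioi 0) := by ring
    _ = 2 * volume (Aset B x t n k ∩ Y ⁻¹' (Ioi 0)) := by
        rw [hsymm, gauss_atom hνne, mul_zero, add_zero,
          ← hprod _ measurableSet_Ioi, two_mul]
    _ = 2 * volume (Aset B x t n k ∩ {ω | 0 < Y ω}) := by rfl

lemma A_pairwise (n : ℕ) :
    (↑(Finset.range (n+1)) : Set ℕ).PairwiseDisjoint (fun k => Aset B x t n k) := by
  intro j _ k _ hjk
  rcases lt_or_gt_of_ne hjk with h | h
  · exact A_disj j k h
  · exact (A_disj k j h).symm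

lemma upper (hB : IsStandardBM B) (ht : 0 < t) {n : ℕ} (hn : n ≠ 0) :
    volume (Eset B x t n) ≤ 2 * volume {ω | x < B t ω} := by
  classical
  have hpd := A_pairwise (B := B) (x := x) (t := t) n
  have hpd2 : (↑(Finset.range (n+1)) : Set ℕ).PairwiseDisjoint
      (fun k => Aset B x t n k ∩ {ω | x < B t ω}) :=
    fun a ha b hb hab => ((hpd ha hb hab).mono inter_subset_left inter_subset_left)
  have hBt : MeasurableSet {ω : Ω | x < B t ω} := measurableSet_lt measurable_const (hB.2.2.1 t)
  rw [E_eq_union, measure_biUnion_finset hpd (fun k _ => meas_A hB n k)]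
  have hstep : ∀ k ∈ Finset.range (n+1), volume (Aset B x t n k)
      ≤ 2 * volume (Aset B x t n k ∩ {ω | x < B t ω}) := by
    intro k hkmem
    by_cases hkn : k < n
    · rw [upper_k hB ht hn hkn]
      refine mul_le_mul_right (measure_mono ?_) 2
      rintro ω ⟨hA, hY⟩
      simp only [mem_setOf_eq] at hY ⊢
      exact ⟨hA, lt_trans hA.1 (by linarith)⟩
    · have hkn' : k = n := by simp at hkmem; omega
      have hsub : Aset B x t n k ⊆ {ω | x < B t ω} := by
        rintro ω ⟨h1, _⟩
        rw [hkn'] at h1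
        rw [mem_setOf_eq, ← gr_last (t := t) hn]
        exact h1
      rw [Set.inter_eq_left.mpr hsub]
      exact le_mul_of_one_le_left zero_le one_le_two
  calc ∑ k ∈ Finset.range (n+1), volume (Aset B x t n k)
      ≤ ∑ k ∈ Finset.range (n+1), 2 * volume (Aset B x t n k ∩ {ω | x < B t ω}) :=
        Finset.sum_le_sum hstep
    _ = 2 * ∑ k ∈ Finset.range (n+1), volume (Aset B x t n k ∩ {ω | x < B t ω}) :=
        (Finset.mul_sum _ _ _).symm
    _ = 2 * volume (⋃ k ∈ Finset.range (n+1), (Aset B x t n k ∩ {ω | x < B t ω})) := by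
        rw [measure_biUnion_finset hpd2 (fun k _ => (meas_A hB n k).inter hBt)]
    _ ≤ 2 * volume {ω | x < B t ω} := by
        gcongr
        exact iUnion₂_subset fun k _ => inter_subset_right

/-- key reflection inequality for `k < n` -/
lemma lower_k (hB : IsStandardBM B) (ht : 0 < t) {n k : ℕ} (hn : n ≠ 0) (hk : k < n)
    {ε : ℝ} (hε : 0 < ε) :
    volume (Aset B x t n k ∩ {ω | B (gr t n k) ω ≤ x + ε} ∩ {ω | x + 2*ε < B t ω})
      ≤ volume (Aset B x t n k ∩ {ω | B t ω < x}) := by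
  classical
  set Z : Ω → (Fin (k+1) → ℝ) := fun ω (j : Fin (k+1)) => B (gr t n j.1) ω with hZ
  set Y : Ω → ℝ := fun ω => B t ω - B (gr t n k) ω with hY
  have hZmeas : Measurable Z := measurable_pi_lambda _ (fun j => hB.2.2.1 _)
  have hYmeas : Measurable Y := (hB.2.2.1 t).sub (hB.2.2.1 _)
  have hindep := indep_Z_Y hB ht hn hk.le
  have hmap : (volume : Measure Ω).map (fun ω => (Z ω, Y ω))
      = ((volume : Measure Ω).map Z).prod ((volume : Measure Ω).map Y) :=
    (indepFun_iff_map_prod_eq_prod_map_map hZmeas.aemeasurable hYmeas.aemeasurable).mp hindep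
  rw [show (volume : Measure Ω).map Y = gaussianReal 0 (Real.toNNReal (t - gr t n k)) from
    law_Y hB ht hn hk.le] at hmap
  set ν := gaussianReal 0 (Real.toNNReal (t - gr t n k)) with hν
  set ζ := (volume : Measure Ω).map Z with hζ
  set G1 : Set ((Fin (k+1) → ℝ) × ℝ) :=
    {p | p.1 ∈ Fset x k ∧ p.1 (Fin.last k) + p.2 < x} with hG1
  set G2 : Set ((Fin (k+1) → ℝ) × ℝ) :=
    {p | p.1 ∈ Fset x k ∧ p.1 (Fin.last k) ≤ x + ε ∧ x + 2*ε < p.1 (Fin.last k) + p.2} with hG2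
  have hmeas1 : MeasurableSet G1 := by
    refine (measurable_fst (meas_F x k)).inter ?_
    exact measurableSet_lt (((measurable_pi_apply _).comp measurable_fst).add measurable_snd)
      measurable_const
  have hmeas2 : MeasurableSet G2 := by
    refine (measurable_fst (meas_F x k)).inter (MeasurableSet.inter ?_ ?_)
    · exact measurableSet_le ((measurable_pi_apply _).comp measurable_fst) measurable_const
    · exact measurableSet_lt measurable_const
        (((measurable_pi_apply _).comp measurable_fst).add measurable_snd)
  have hBtZ : ∀ ω, B t ω = Z ω (Fin.last k) + Y ω := by
    intro ω
    simp only [hZ, hY, Fin.val_last]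
    ring
  have hpre1 : Aset B x t n k ∩ {ω | B t ω < x} = (fun ω => (Z ω, Y ω)) ⁻¹' G1 := by
    rw [A_pre (B := B) (x := x) (t := t) n k]
    ext ω
    simp only [hG1, mem_inter_iff, mem_preimage, mem_setOf_eq, hBtZ ω]
    exact Iff.rfl
  have hpre2 : Aset B x t n k ∩ {ω | B (gr t n k) ω ≤ x + ε} ∩ {ω | x + 2*ε < B t ω}
      = (fun ω => (Z ω, Y ω)) ⁻¹' G2 := by
    rw [A_pre (B := B) (x := x) (t := t) n k]
    ext ω
    have hcoord : Z ω (Fin.last k) = B (gr t n k) ω := by simp [hZ, Fin.val_last]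
    simp only [hG2, mem_inter_iff, mem_preimage, mem_setOf_eq, hBtZ ω, hcoord]
    tauto
  have happ : ∀ (G : Set ((Fin (k+1) → ℝ) × ℝ)), MeasurableSet G →
      volume ((fun ω => (Z ω, Y ω)) ⁻¹' G) = ∫⁻ u, ν (Prod.mk u ⁻¹' G) ∂ζ := by
    intro G hG
    rw [← Measure.map_apply (hZmeas.prodMk hYmeas) hG, hmap, Measure.prod_apply hG]
  rw [hpre1, hpre2, happ _ hmeas1, happ _ hmeas2]
  refine lintegral_mono (fun u => ?_)
  by_cases hF : u ∈ Fset x k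
  · by_cases he : u (Fin.last k) ≤ x + ε
    · have h2 : Prod.mk u ⁻¹' G2 ⊆ Ioi (x + 2*ε - u (Fin.last k)) := by
        intro y hy
        simp only [hG2, mem_preimage, mem_setOf_eq] at hy
        simp only [mem_Ioi]
        linarith [hy.2.2]
      have h1 : Prod.mk u ⁻¹' G1 = Iio (x - u (Fin.last k)) := by
        ext y
        simp only [hG1, mem_preimage, mem_setOf_eq, mem_Iio, hF, true_and]
        constructor <;> intro <;> linarith
      calc ν (Prod.mk u ⁻¹' G2) ≤ ν (Ioi (x + 2*ε - u (Fin.last k))) := measure_mono h2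
        _ ≤ ν (Ioi (u (Fin.last k) - x)) := by
            apply measure_mono
            apply Ioi_subset_Ioi
            linarith
        _ = ν (Ioi (-(x - u (Fin.last k)))) := by ring_nf
        _ = ν (Iio (x - u (Fin.last k))) := (gauss_symm _ _).symm
        _ = ν (Prod.mk u ⁻¹' G1) := by rw [h1]
    · have : Prod.mk u ⁻¹' G2 = ∅ := by
        ext y
        simp only [hG2, mem_preimage, mem_setOf_eq, mem_empty_iff_false, iff_false]
        tauto
      rw [this]
      simp
  · have h2 : Prod.mk u ⁻¹' G2 = ∅ := by
      ext y
      simp only [hG2, mem_preimage, mem_setOf_eq, mem_empty_iff_false, iff_false]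
      tauto
    rw [h2]
    simp

lemma lower (hB : IsStandardBM B) (ht : 0 < t) {n : ℕ} (hn : n ≠ 0) {ε : ℝ} (hε : 0 < ε) :
    volume {ω | x < B t ω} + volume {ω | x + 2*ε < B t ω}
      ≤ volume (Eset B x t n) + volume (Oset B x t n ε) := by
  classical
  have hpd := A_pairwise (B := B) (x := x) (t := t) n
  have hBt : MeasurableSet {ω : Ω | x < B t ω} := measurableSet_lt measurable_const (hB.2.2.1 t)
  have hBt2 : MeasurableSet {ω : Ω | x + 2*ε < B t ω} :=
    measurableSet_lt measurable_const (hB.2.2.1 t)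
  -- decompose over the A_k
  have hdecomp : ∀ (C : Set Ω), MeasurableSet C → C ⊆ Eset B x t n →
      volume C = ∑ k ∈ Finset.range (n+1), volume (Aset B x t n k ∩ C) := by
    intro C hC hCE
    have : C = ⋃ k ∈ Finset.range (n+1), (Aset B x t n k ∩ C) := by
      rw [← iUnion₂_inter, ← E_eq_union]
      rw [Set.inter_eq_right.mpr hCE]
    nth_rewrite 1 [this]
    exact measure_biUnion_finset
      (fun a ha b hb hab => ((hpd ha hb hab).mono inter_subset_left inter_subset_left))
      (fun k _ => (meas_A hB n k).inter hC)
  have hsubE : {ω : Ω | x < B t ω} ⊆ Eset B x t n := by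
    intro ω hω
    exact ⟨n, le_rfl, by rwa [gr_last hn]⟩
  have hsubE2 : {ω : Ω | x + 2*ε < B t ω} ⊆ Eset B x t n := by
    intro ω hω
    simp only [mem_setOf_eq] at hω
    exact hsubE (by simp only [mem_setOf_eq]; linarith)
  have hO : ∑ k ∈ Finset.range (n+1),
      volume (Aset B x t n k ∩ {ω | x + ε < B (gr t n k) ω}) = volume (Oset B x t n ε) := by
    rw [Oset]
    exact (measure_biUnion_finset
      (fun a ha b hb hab => ((hpd ha hb hab).mono inter_subset_left inter_subset_left))
      (fun k _ => (meas_A hB n k).inter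
        (measurableSet_lt measurable_const (hB.2.2.1 _)))).symm
  have hE : volume (Eset B x t n) = ∑ k ∈ Finset.range (n+1), volume (Aset B x t n k) := by
    rw [E_eq_union]
    exact measure_biUnion_finset hpd (fun k _ => meas_A hB n k)
  rw [hdecomp _ hBt hsubE, hdecomp _ hBt2 hsubE2, hE, ← hO, ← Finset.sum_add_distrib,
    ← Finset.sum_add_distrib]
  refine Finset.sum_le_sum (fun k hkmem => ?_)
  by_cases hkn : k < n
  · -- main case
    have step1 : volume (Aset B x t n k ∩ {ω | x + 2*ε < B t ω})
        ≤ volume (Aset B x t n k ∩ {ω | B t ω < x})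
          + volume (Aset B x t n k ∩ {ω | x + ε < B (gr t n k) ω}) := by
      have hsplit : Aset B x t n k ∩ {ω | x + 2*ε < B t ω}
          ⊆ (Aset B x t n k ∩ {ω | B (gr t n k) ω ≤ x + ε} ∩ {ω | x + 2*ε < B t ω})
            ∪ (Aset B x t n k ∩ {ω | x + ε < B (gr t n k) ω}) := by
        rintro ω ⟨hA, hC⟩
        by_cases hle : B (gr t n k) ω ≤ x + ε
        · exact Or.inl ⟨⟨hA, hle⟩, hC⟩
        · exact Or.inr ⟨hA, lt_of_not_ge hle⟩
      calc volume (Aset B x t n k ∩ {ω | x + 2*ε < B t ω})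
          ≤ volume ((Aset B x t n k ∩ {ω | B (gr t n k) ω ≤ x + ε} ∩ {ω | x + 2*ε < B t ω})
              ∪ (Aset B x t n k ∩ {ω | x + ε < B (gr t n k) ω})) := measure_mono hsplit
        _ ≤ volume (Aset B x t n k ∩ {ω | B (gr t n k) ω ≤ x + ε} ∩ {ω | x + 2*ε < B t ω})
              + volume (Aset B x t n k ∩ {ω | x + ε < B (gr t n k) ω}) := measure_union_le _ _
        _ ≤ volume (Aset B x t n k ∩ {ω | B t ω < x})
              + volume (Aset B x t n k ∩ {ω | x + ε < B (gr t n k) ω}) :=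
            add_le_add (lower_k hB ht hn hkn hε) le_rfl
    have step2 : volume (Aset B x t n k ∩ {ω | x < B t ω})
        + volume (Aset B x t n k ∩ {ω | B t ω < x}) ≤ volume (Aset B x t n k) := by
      rw [← measure_union ?hd ((meas_A hB n k).inter
        (measurableSet_lt (hB.2.2.1 t) measurable_const))]
      case hd =>
        rw [Set.disjoint_left]
        rintro ω ⟨_, h1⟩ ⟨_, h2⟩
        simp only [mem_setOf_eq] at h1 h2
        linarith
      apply measure_mono
      rintro ω (⟨hA, _⟩ | ⟨hA, _⟩) <;> exact hA
    calc volume (Aset B x t n k ∩ {ω | x < B t ω})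
          + volume (Aset B x t n k ∩ {ω | x + 2*ε < B t ω})
        ≤ volume (Aset B x t n k ∩ {ω | x < B t ω})
          + (volume (Aset B x t n k ∩ {ω | B t ω < x})
            + volume (Aset B x t n k ∩ {ω | x + ε < B (gr t n k) ω})) := by gcongr
      _ = (volume (Aset B x t n k ∩ {ω | x < B t ω})
            + volume (Aset B x t n k ∩ {ω | B t ω < x}))
          + volume (Aset B x t n k ∩ {ω | x + ε < B (gr t n k) ω}) := by ring
      _ ≤ volume (Aset B x t n k)
          + volume (Aset B x t n k ∩ {ω | x + ε < B (gr t n k) ω}) := by gcongr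
  · -- k = n
    have hkn' : k = n := by simp at hkmem; omega
    have h1 : volume (Aset B x t n k ∩ {ω | x < B t ω}) ≤ volume (Aset B x t n k) :=
      measure_mono inter_subset_left
    have h2 : volume (Aset B x t n k ∩ {ω | x + 2*ε < B t ω})
        ≤ volume (Aset B x t n k ∩ {ω | x + ε < B (gr t n k) ω}) := by
      apply measure_mono
      rintro ω ⟨hA, hC⟩
      refine ⟨hA, ?_⟩
      simp only [mem_setOf_eq] at hC ⊢
      rw [hkn', gr_last hn]
      linarith
    exact add_le_add h1 h2

lemma meas_O (hB : IsStandardBM B) (n : ℕ) (ε : ℝ) : MeasurableSet (Oset B x t n ε) :=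
  Finset.measurableSet_biUnion _ (fun k _ => (meas_A hB n k).inter
    (measurableSet_lt measurable_const (hB.2.2.1 _)))

lemma not_overshoot (hB : IsStandardBM B) (hx : 0 < x) (ht : 0 < t) {ε : ℝ} (hε : 0 < ε)
    (ω : Ω) : ∃ M : ℕ, ∀ m ≥ M, ω ∉ Oset B x t (2^m) ε := by
  have hucont : UniformContinuousOn (fun s => B s ω) (Icc 0 t) :=
    isCompact_Icc.uniformContinuousOn_of_continuous (hB.2.1 ω).continuousOn
  rw [Metric.uniformContinuousOn_iff] at hucont
  obtain ⟨δ, hδ, hδ'⟩ := hucont ε hε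
  obtain ⟨M, hM⟩ := pow_unbounded_of_one_lt (t / δ) (one_lt_two (α := ℝ))
  refine ⟨M, fun m hm hcon => ?_⟩
  have hsmall : t / 2^m < δ := by
    rw [div_lt_iff₀ (by positivity)]
    have h1 : t < 2^M * δ := by
      have h2 := (div_lt_iff₀ hδ).mp hM
      linarith
    have h2 : (2:ℝ)^M ≤ 2^m := by
      apply pow_le_pow_right₀ one_le_two hm
    nlinarith
  set n : ℕ := 2^m with hn
  have hn0 : n ≠ 0 := pow_ne_zero m two_ne_zero
  have hncast : ((n:ℕ):ℝ) = (2:ℝ)^m := by rw [hn]; push_cast; ring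
  simp only [Oset, Finset.mem_coe, mem_iUnion, Finset.mem_range] at hcon
  obtain ⟨k, hkmem, ⟨⟨hxk, hprev⟩, hover⟩⟩ := hcon
  have hkn : k ≤ n := by omega
  simp only [mem_setOf_eq] at hover
  have hk0 : k ≠ 0 := by
    intro h0
    rw [h0, gr_zero, hB.1] at hover
    linarith
  have hj : k - 1 < k := by omega
  have hprevj : B (gr t n (k-1)) ω ≤ x := hprev (k-1) hj
  have hmem1 : gr t n k ∈ Icc (0:ℝ) t := ⟨gr_nonneg ht n k, gr_le ht hn0 hkn⟩
  have hmem2 : gr t n (k-1) ∈ Icc (0:ℝ) t := ⟨gr_nonneg ht n (k-1), gr_le ht hn0 (by omega)⟩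
  have hdist : dist (gr t n k) (gr t n (k-1)) < δ := by
    rw [Real.dist_eq]
    have hg : gr t n k - gr t n (k-1) = t / n := by
      unfold gr
      have : ((k - 1 : ℕ) : ℝ) = (k : ℝ) - 1 := by
        have : (1:ℕ) ≤ k := by omega
        push_cast [this]
        ring
      rw [this]
      field_simp
      ring
    rw [abs_of_nonneg (by rw [hg]; positivity), hg]
    rw [hncast]
    exact hsmall
  have := hδ' _ hmem1 _ hmem2 hdist
  rw [Real.dist_eq] at this
  have habs := le_abs_self (B (gr t n k) ω - B (gr t n (k-1)) ω)
  linarith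

lemma overshoot_tendsto_zero (hB : IsStandardBM B) (hx : 0 < x) (ht : 0 < t)
    {ε : ℝ} (hε : 0 < ε) :
    Filter.Tendsto (fun m : ℕ => volume (Oset B x t (2^m) ε)) Filter.atTop (nhds 0) := by
  set s : ℕ → Set Ω := fun m => ⋃ (j : ℕ) (_ : m ≤ j), Oset B x t (2^j) ε with hs
  have hmeas : ∀ m, NullMeasurableSet (s m) (volume : Measure Ω) := by
    intro m
    exact (MeasurableSet.iUnion (fun j => MeasurableSet.iUnion
      (fun _ => meas_O hB (2^j) ε))).nullMeasurableSet
  have hanti : Antitone s := by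
    intro a b hab
    exact iUnion₂_subset (fun j hj => subset_iUnion₂ (s := fun j _ => Oset B x t (2^j) ε) j
      (le_trans hab hj))
  have hempty : ⋂ m, s m = ∅ := by
    ext ω
    simp only [mem_iInter, mem_empty_iff_false, iff_false, not_forall]
    obtain ⟨M, hM⟩ := not_overshoot hB hx ht hε ω
    refine ⟨M, ?_⟩
    simp only [hs, mem_iUnion, not_exists]
    intro j hj
    exact hM j hj
  have htend : Filter.Tendsto (fun m => volume (s m)) Filter.atTop (nhds 0) := by
    have h := tendsto_measure_iInter_atTop hmeas hanti
      ⟨0, measure_ne_top _ _⟩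
    rw [hempty, measure_empty] at h
    exact h
  apply tendsto_of_tendsto_of_tendsto_of_le_of_le tendsto_const_nhds htend
  · intro m; exact zero_le
  · intro m
    apply measure_mono
    exact subset_iUnion₂ (s := fun j _ => Oset B x t (2^j) ε) m le_rfl

lemma E_mono (ht : 0 < t) : Monotone (fun m : ℕ => Eset B x t (2^m)) := by
  intro a b hab ω hω
  obtain ⟨k, hk, hxk⟩ := hω
  refine ⟨k * 2^(b-a), ?_, ?_⟩
  · calc k * 2^(b-a) ≤ 2^a * 2^(b-a) := by gcongr
      _ = 2^b := by rw [← pow_add]; congr 1; omega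

  · have hgr : gr t (2^b) (k * 2^(b-a)) = gr t (2^a) k := by
      unfold gr
      have hb : (b:ℕ) = a + (b-a) := by omega
      push_cast
      rw [div_eq_div_iff (by positivity) (by positivity)]
      have h2b : (2:ℝ)^b = 2^a * 2^(b-a) := by
        rw [← pow_add]
        congr 1
      rw [h2b]
      ring
    rwa [hgr]

lemma bdd_above_path (hB : IsStandardBM B) (ω : Ω) :
    BddAbove (Set.range fun s : Icc (0:ℝ) t => B s ω) := by
  have hr : (Set.range fun s : Icc (0:ℝ) t => B s ω) = (fun r => B r ω) '' (Icc 0 t) := by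
    rw [show (fun s : Icc (0:ℝ) t => B s.1 ω) = (fun r => B r ω) ∘ Subtype.val from rfl,
      range_comp, Subtype.range_coe]
  rw [hr]
  exact (isCompact_Icc.image (hB.2.1 ω)).bddAbove

lemma target_eq (hB : IsStandardBM B) (hx : 0 < x) (ht : 0 < t) :
    {ω : Ω | x < ⨆ s : Icc (0:ℝ) t, B s ω} = ⋃ m : ℕ, Eset B x t (2^m) := by
  haveI : Nonempty (Icc (0:ℝ) t) := ⟨⟨0, le_rfl, ht.le⟩⟩
  ext ω
  simp only [mem_setOf_eq, mem_iUnion]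
  constructor
  · intro hω
    by_contra hcon
    push_neg at hcon
    have hall : ∀ (m : ℕ) (k : ℕ), k ≤ 2^m → B (gr t (2^m) k) ω ≤ x := by
      intro m k hk
      by_contra h
      exact hcon m ⟨k, hk, lt_of_not_ge h⟩
    have hle : ∀ s : Icc (0:ℝ) t, B s.1 ω ≤ x := by
      rintro ⟨s, hs0, hst⟩
      -- approximate s by dyadic grid points from below
      set a : ℕ → ℝ := fun m => gr t (2^m) ⌊s * 2^m / t⌋₊ with ha
      have hky : ∀ m : ℕ, (⌊s * 2^m / t⌋₊ : ℕ) ≤ 2^m := by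
        intro m
        have h1 : s * 2^m / t ≤ (2^m : ℝ) := by
          rw [div_le_iff₀ ht]
          nlinarith [pow_pos (show (0:ℝ) < 2 by norm_num) m]
        calc ⌊s * 2^m / t⌋₊ ≤ ⌊((2^m : ℕ) : ℝ)⌋₊ := Nat.floor_le_floor (by push_cast; linarith)
          _ = 2^m := Nat.floor_natCast _
      have hBa : ∀ m, B (a m) ω ≤ x := fun m => hall m _ (hky m)
      have htend : Filter.Tendsto a Filter.atTop (nhds s) := by
        have hy : ∀ m : ℕ, 0 ≤ s * 2^m / t := fun m => by positivity
        have hub : ∀ m : ℕ, a m ≤ s := by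
          intro m
          have h1 := Nat.floor_le (hy m)
          simp only [ha]
          unfold gr
          rw [div_le_iff₀ (by positivity : (0:ℝ) < ((2^m : ℕ):ℝ))]
          have hcast : ((2^m : ℕ):ℝ) = (2:ℝ)^m := by push_cast; ring
          rw [hcast]
          rw [le_div_iff₀ ht] at h1
          exact h1
        have hlb : ∀ m : ℕ, s - t / 2^m ≤ a m := by
          intro m
          have h1 := Nat.lt_floor_add_one (s * 2^m / t)
          simp only [ha]
          unfold gr
          have hcast : ((2^m : ℕ):ℝ) = (2:ℝ)^m := by push_cast; ring
          rw [hcast, sub_le_iff_le_add, ← add_div, le_div_iff₀ (by positivity : (0:ℝ) < 2^m)]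
          rw [div_lt_iff₀ ht] at h1
          nlinarith [pow_pos (show (0:ℝ) < 2 by norm_num) m]
        have hzero : Filter.Tendsto (fun m : ℕ => t / 2^m) Filter.atTop (nhds 0) := by
          have : (fun m : ℕ => t / 2^m) = fun m : ℕ => t * (1/2 : ℝ)^m := by
            funext m
            rw [div_pow, one_pow]
            ring
          rw [this]
          have := tendsto_pow_atTop_nhds_zero_of_lt_one (by norm_num : (0:ℝ) ≤ 1/2)
            (by norm_num : (1/2:ℝ) < 1)
          have h2 := this.const_mul t
          simpa using h2
        have hlow : Filter.Tendsto (fun m : ℕ => s - t / 2^m) Filter.atTop (nhds s) := by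
          have h3 := (tendsto_const_nhds :
            Filter.Tendsto (fun _ : ℕ => s) Filter.atTop (nhds s)).sub hzero
          simpa using h3
        exact tendsto_of_tendsto_of_tendsto_of_le_of_le hlow tendsto_const_nhds hlb hub
      have hcont := ((hB.2.1 ω).tendsto s).comp htend
      exact le_of_tendsto hcont (Filter.Eventually.of_forall hBa)
    exact absurd (ciSup_le hle) (not_le.mpr hω)
  · rintro ⟨m, k, hk, hxk⟩
    have hmem : gr t (2^m) k ∈ Icc (0:ℝ) t :=
      ⟨gr_nonneg ht _ k, gr_le ht (pow_ne_zero m two_ne_zero) hk⟩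
    exact lt_of_lt_of_le hxk (le_ciSup (bdd_above_path hB ω) (⟨gr t (2^m) k, hmem⟩ : Icc (0:ℝ) t))

end RefPf

open RefPf in
/-- Reflection principle: for `x > 0`, `t > 0`,
`P(max_{0 ≤ s ≤ t} B(s) > x) = 2 P(B(t) > x)`. -/
theorem reflection_principle {Ω : Type*} [MeasureSpace Ω]
    [IsProbabilityMeasure (volume : Measure Ω)]
    (B : ℝ → Ω → ℝ) (hB : IsStandardBM B) (x t : ℝ) (hx : 0 < x) (ht : 0 < t) :
    volume {ω | x < ⨆ s : Icc (0 : ℝ) t, B s ω} =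
      2 * volume {ω | x < B t ω} := by
  rw [target_eq hB hx ht]
  have hmono := E_mono (B := B) (x := x) ht
  rw [hmono.measure_iUnion]
  apply le_antisymm
  · exact iSup_le fun m => upper hB ht (pow_ne_zero m two_ne_zero)
  · set S := ⨆ m : ℕ, volume (Eset B x t (2^m)) with hSdef
    have hS : ∀ (ε : ℝ), 0 < ε →
        volume {ω | x < B t ω} + volume {ω | x + 2*ε < B t ω} ≤ S := by
      intro ε hε
      have htendE : Filter.Tendsto (fun m : ℕ => volume (Eset B x t (2^m)))
          Filter.atTop (nhds S) :=
        tendsto_atTop_iSup (fun a b hab => measure_mono (hmono hab))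
      have htendO := overshoot_tendsto_zero hB hx ht hε
      have htend := htendE.add htendO
      rw [add_zero] at htend
      exact ge_of_tendsto htend (Filter.Eventually.of_forall
        (fun m => lower hB ht (pow_ne_zero m two_ne_zero) hε))
    have hsup : volume {ω : Ω | x < B t ω}
        = ⨆ j : ℕ, volume {ω : Ω | x + 2*(1/((j:ℝ)+1)) < B t ω} := by
      have hmono2 : Monotone (fun j : ℕ => {ω : Ω | x + 2*(1/((j:ℝ)+1)) < B t ω}) := by
        intro a b hab ω hω
        simp only [mem_setOf_eq] at hω ⊢
        have h1 : (1:ℝ)/((b:ℝ)+1) ≤ 1/((a:ℝ)+1) := by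
          apply div_le_div_of_nonneg_left one_pos.le (by positivity)
          push_cast
          linarith [(Nat.cast_le (α := ℝ)).mpr hab]
        linarith
      rw [← hmono2.measure_iUnion]
      congr 1
      ext ω
      simp only [mem_iUnion, mem_setOf_eq]
      constructor
      · intro h
        obtain ⟨j, hj⟩ := exists_nat_one_div_lt (show (0:ℝ) < (B t ω - x)/2 by linarith)
        exact ⟨j, by push_cast at hj ⊢; linarith⟩
      · rintro ⟨j, hj⟩
        have : (0:ℝ) < 1/((j:ℝ)+1) := by positivity
        linarith
    calc 2 * volume {ω : Ω | x < B t ω}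
        = volume {ω : Ω | x < B t ω} + volume {ω : Ω | x < B t ω} := two_mul _
      _ = volume {ω : Ω | x < B t ω}
          + ⨆ j : ℕ, volume {ω : Ω | x + 2*(1/((j:ℝ)+1)) < B t ω} := by rw [← hsup]
      _ = ⨆ j : ℕ, (volume {ω : Ω | x < B t ω}
          + volume {ω : Ω | x + 2*(1/((j:ℝ)+1)) < B t ω}) := by rw [ENNReal.add_iSup]
      _ ≤ S := iSup_le fun j => hS _ (by positivity)
end
end

section
/- Let X₁, ..., Xₙ be coalescing simple symmetric random walks on ℤ in discrete time started at time 0 from n (ordered) initial positions, observed up to time T, and let η_T be the number of distinct values among X₁(T), ..., Xₙ(T). Then for every k ≥ 1, P(η_T ≥ k+1) ≤ P(η_T ≥ k) · P(η_T ≥ 2). -/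
open MeasureTheory ProbabilityTheory Set
open scoped ENNReal

noncomputable section

/-- The coalescing system of random walks driven by a field `Δ` of increments:
`walk Δ l ω 0 = l` and `walk Δ l ω (j+1) = walk Δ l ω j + Δ (walk Δ l ω j) j ω`.
Walks driven by the same field automatically coalesce upon meeting. -/
def walk {Ω : Type*} (Δ : ℤ → ℕ → Ω → ℤ) (l : ℤ) (ω : Ω) : ℕ → ℤ
  | 0 => l
  | j + 1 => walk Δ l ω j + Δ (walk Δ l ω j) j ω

namespace CRW

/-- the deterministic increment field read off a configuration `σ`. -/
def cf (z : ℤ) (j : ℕ) (σ : Finset (ℤ × ℕ)) : ℤ :=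
  if (z, j) ∈ σ then 1 else -1

/-- the walk driven by a configuration. -/
def CW (σ : Finset (ℤ × ℕ)) (a : ℤ) (t : ℕ) : ℤ := walk cf a σ t

lemma CW_zero (σ : Finset (ℤ × ℕ)) (a : ℤ) : CW σ a 0 = a := rfl

lemma CW_succ (σ : Finset (ℤ × ℕ)) (a : ℤ) (t : ℕ) :
    CW σ a (t + 1) = CW σ a t + cf (CW σ a t) t σ := rfl

lemma cf_eq_or (z : ℤ) (j : ℕ) (σ : Finset (ℤ × ℕ)) : cf z j σ = 1 ∨ cf z j σ = -1 := by
  unfold cf; split <;> simp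

lemma cf_abs (z : ℤ) (j : ℕ) (σ : Finset (ℤ × ℕ)) : |cf z j σ| ≤ 1 := by
  rcases cf_eq_or z j σ with h | h <;> simp [h]

lemma CW_dist (σ : Finset (ℤ × ℕ)) (a : ℤ) (t : ℕ) : |CW σ a t - a| ≤ t := by
  induction t with
  | zero => simp [CW_zero]
  | succ t ih =>
      rw [CW_succ]
      have := cf_abs (CW σ a t) t σ
      calc |CW σ a t + cf (CW σ a t) t σ - a| = |(CW σ a t - a) + cf (CW σ a t) t σ| := by
            ring_nf
        _ ≤ |CW σ a t - a| + |cf (CW σ a t) t σ| := abs_add_le _ _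
        _ ≤ (t : ℤ) + 1 := by push_cast; omega
        _ = ((t + 1 : ℕ) : ℤ) := by push_cast; ring

lemma CW_parity (σ : Finset (ℤ × ℕ)) (a : ℤ) (t : ℕ) : Even (CW σ a t - a - t) := by
  induction t with
  | zero => simp [CW_zero]
  | succ t ih =>
      rw [CW_succ]
      rcases ih with ⟨c, hc⟩
      rcases cf_eq_or (CW σ a t) t σ with h | h <;> rw [h]
      · exact ⟨c, by push_cast at hc ⊢; linarith⟩
      · exact ⟨c - 1, by push_cast at hc ⊢; linarith⟩

lemma CW_noncross (σ : Finset (ℤ × ℕ)) {a b : ℤ} (hab : a ≤ b) (he : Even (b - a)) (t : ℕ) :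
    CW σ a t ≤ CW σ b t := by
  induction t with
  | zero => simpa [CW_zero]
  | succ t ih =>
      have hpar : Even (CW σ b t - CW σ a t) := by
        have h1 := CW_parity σ a t
        have h2 := CW_parity σ b t
        rcases h1 with ⟨c, hc⟩; rcases h2 with ⟨d, hd⟩; rcases he with ⟨e, he'⟩
        exact ⟨d - c + e, by linarith⟩
      rcases eq_or_lt_of_le ih with h | h
      · rw [CW_succ, CW_succ, h]
      · have h2 : CW σ a t + 2 ≤ CW σ b t := by
          rcases hpar with ⟨c, hc⟩; omega
        rw [CW_succ, CW_succ]
        rcases cf_eq_or (CW σ a t) t σ with ha | ha <;>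
          rcases cf_eq_or (CW σ b t) t σ with hb | hb <;> rw [ha, hb] <;> omega

lemma CW_coalesce (σ : Finset (ℤ × ℕ)) {a b : ℤ} {t : ℕ} (h : CW σ a t = CW σ b t) :
    ∀ u, t ≤ u → CW σ a u = CW σ b u := by
  have key : ∀ d, CW σ a (t + d) = CW σ b (t + d) := by
    intro d
    induction d with
    | zero => simpa using h
    | succ d ih => rw [← Nat.add_assoc, CW_succ, CW_succ, ih]
  intro u hu
  have : u = t + (u - t) := by omega
  rw [this]; exact key _

lemma CW_lt_iff (σ : Finset (ℤ × ℕ)) {a b : ℤ} (hab : a ≤ b) (he : Even (b - a)) (T : ℕ) :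
    CW σ a T < CW σ b T ↔ ∀ t, t ≤ T → CW σ a t < CW σ b t := by
  constructor
  · intro hT t ht
    rcases lt_or_eq_of_le (CW_noncross σ hab he t) with h | h
    · exact h
    · exact absurd (CW_coalesce σ h T ht) (ne_of_lt hT)
  · intro h; exact h T le_rfl


variable {α : Type*} [DecidableEq α]

/-- `A` is determined by the coordinates in `P` (among subsets of `W`). -/
def Det (W P : Finset α) (A : Finset (Finset α)) : Prop :=
  ∀ σ τ : Finset α, σ ⊆ W → τ ⊆ W → σ ∩ P = τ ∩ P → (σ ∈ A ↔ τ ∈ A)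

lemma Det.inter {W P Q : Finset α} {A B : Finset (Finset α)}
    (hA : Det W P A) (hB : Det W Q B) : Det W (P ∪ Q) (A ∩ B) := by
  intro σ τ hσ hτ h
  have hP : σ ∩ P = τ ∩ P := by
    ext x
    have := Finset.ext_iff.1 h x
    simp only [Finset.mem_inter, Finset.mem_union] at this ⊢
    tauto
  have hQ : σ ∩ Q = τ ∩ Q := by
    ext x
    have := Finset.ext_iff.1 h x
    simp only [Finset.mem_inter, Finset.mem_union] at this ⊢
    tauto
  simp only [Finset.mem_inter]
  rw [hA σ τ hσ hτ hP, hB σ τ hσ hτ hQ]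

/-- events determined by disjoint coordinate sets are independent (counting form). -/
lemma det_prod {W P Q : Finset α} {A B : Finset (Finset α)}
    (hAW : A ⊆ W.powerset) (hBW : B ⊆ W.powerset)
    (hA : Det W P A) (hB : Det W Q B) (hPQ : Disjoint P Q) :
    (A ∩ B).card * 2 ^ W.card = A.card * B.card := by
  classical
  have hd : ∀ x, x ∈ P → x ∈ Q → False := fun x hP hQ =>
    Finset.disjoint_left.1 hPQ hP hQ
  rw [← Finset.card_powerset, ← Finset.card_product, ← Finset.card_product]
  apply Finset.card_bij'
    (i := fun (p : Finset α × Finset α) _ =>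
      ((p.1 ∩ P ∪ p.2 \ P), (p.2 ∩ P ∪ p.1 \ P)))
    (j := fun (p : Finset α × Finset α) _ =>
      ((p.1 ∩ P ∪ p.2 \ P), (p.2 ∩ P ∪ p.1 \ P)))
  · rintro ⟨σ, τ⟩ hmem
    simp only [Finset.mem_product, Finset.mem_inter, Finset.mem_powerset] at hmem
    obtain ⟨⟨hσA, hσB⟩, hτ⟩ := hmem
    have hσW : σ ⊆ W := Finset.mem_powerset.1 (hAW hσA)
    have hαW : (σ ∩ P ∪ τ \ P) ⊆ W := by
      intro x hx
      simp only [Finset.mem_union, Finset.mem_inter, Finset.mem_sdiff] at hx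
      rcases hx with ⟨h1, _⟩ | ⟨h1, _⟩
      exacts [hσW h1, hτ h1]
    have hβW : (τ ∩ P ∪ σ \ P) ⊆ W := by
      intro x hx
      simp only [Finset.mem_union, Finset.mem_inter, Finset.mem_sdiff] at hx
      rcases hx with ⟨h1, _⟩ | ⟨h1, _⟩
      exacts [hτ h1, hσW h1]
    have hαP : (σ ∩ P ∪ τ \ P) ∩ P = σ ∩ P := by
      ext x; simp only [Finset.mem_inter, Finset.mem_union, Finset.mem_sdiff]; tauto
    have hβQ : (τ ∩ P ∪ σ \ P) ∩ Q = σ ∩ Q := by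
      ext x
      simp only [Finset.mem_inter, Finset.mem_union, Finset.mem_sdiff]
      constructor
      · rintro ⟨h1 | ⟨h1, _⟩, h2⟩
        · exact absurd h2 (fun h => hd x h1.2 h)
        · exact ⟨h1, h2⟩
      · rintro ⟨h1, h2⟩
        exact ⟨Or.inr ⟨h1, fun h => hd x h h2⟩, h2⟩
    simp only [Finset.mem_product, Finset.mem_powerset]
    exact ⟨(hA _ _ hαW hσW hαP).2 hσA, (hB _ _ hβW hσW hβQ).2 hσB⟩
  · rintro ⟨a, b⟩ hmem
    simp only [Finset.mem_product, Finset.mem_powerset] at hmem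
    obtain ⟨haA, hbB⟩ := hmem
    have haW : a ⊆ W := Finset.mem_powerset.1 (hAW haA)
    have hbW : b ⊆ W := Finset.mem_powerset.1 (hBW hbB)
    have hσW : (a ∩ P ∪ b \ P) ⊆ W := by
      intro x hx
      simp only [Finset.mem_union, Finset.mem_inter, Finset.mem_sdiff] at hx
      rcases hx with ⟨h1, _⟩ | ⟨h1, _⟩
      exacts [haW h1, hbW h1]
    have hτW : (b ∩ P ∪ a \ P) ⊆ W := by
      intro x hx
      simp only [Finset.mem_union, Finset.mem_inter, Finset.mem_sdiff] at hx
      rcases hx with ⟨h1, _⟩ | ⟨h1, _⟩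
      exacts [hbW h1, haW h1]
    have hP : (a ∩ P ∪ b \ P) ∩ P = a ∩ P := by
      ext x; simp only [Finset.mem_inter, Finset.mem_union, Finset.mem_sdiff]; tauto
    have hQ : (a ∩ P ∪ b \ P) ∩ Q = b ∩ Q := by
      ext x
      simp only [Finset.mem_inter, Finset.mem_union, Finset.mem_sdiff]
      constructor
      · rintro ⟨h1 | ⟨h1, _⟩, h2⟩
        · exact absurd h2 (fun h => hd x h1.2 h)
        · exact ⟨h1, h2⟩
      · rintro ⟨h1, h2⟩
        exact ⟨Or.inr ⟨h1, fun h => hd x h h2⟩, h2⟩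
    simp only [Finset.mem_product, Finset.mem_inter, Finset.mem_powerset]
    exact ⟨⟨(hA _ _ hσW haW hP).2 haA, (hB _ _ hσW hbW hQ).2 hbB⟩, hτW⟩
  · rintro ⟨σ, τ⟩ _
    have key : ∀ (u v : Finset α), (u ∩ P ∪ v \ P) ∩ P ∪ (v ∩ P ∪ u \ P) \ P = u := by
      intro u v
      ext x
      simp only [Finset.mem_union, Finset.mem_inter, Finset.mem_sdiff]
      tauto
    simp only [Prod.mk.injEq]
    exact ⟨key σ τ, key τ σ⟩
  · rintro ⟨a, b⟩ _
    have key : ∀ (u v : Finset α), (u ∩ P ∪ v \ P) ∩ P ∪ (v ∩ P ∪ u \ P) \ P = u := by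
      intro u v
      ext x
      simp only [Finset.mem_union, Finset.mem_inter, Finset.mem_sdiff]
      tauto
    simp only [Prod.mk.injEq]
    exact ⟨key a b, key b a⟩

/-- counting a cylinder fiber. -/
lemma fiber_count {W P ρ : Finset α} (hPW : P ⊆ W) (hρ : ρ ⊆ P) :
    (W.powerset.filter (fun σ => σ ∩ P = ρ)).card = 2 ^ (W.card - P.card) := by
  classical
  rw [← Finset.card_sdiff_of_subset hPW, ← Finset.card_powerset]
  apply Finset.card_bij' (i := fun σ _ => σ \ P) (j := fun τ _ => τ ∪ ρ)
  · intro σ hσ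
    simp only [Finset.mem_filter, Finset.mem_powerset] at hσ
    simp only [Finset.mem_powerset]
    intro x hx
    simp only [Finset.mem_sdiff] at hx ⊢
    exact ⟨hσ.1 hx.1, hx.2⟩
  · intro τ hτ
    simp only [Finset.mem_powerset] at hτ
    simp only [Finset.mem_filter, Finset.mem_powerset]
    constructor
    · intro x hx
      rcases Finset.mem_union.1 hx with h | h
      · exact (Finset.mem_sdiff.1 (hτ h)).1
      · exact hPW (hρ h)
    · ext x
      simp only [Finset.mem_inter, Finset.mem_union]
      constructor
      · rintro ⟨h1 | h1, h2⟩
        · exact absurd h2 (Finset.mem_sdiff.1 (hτ h1)).2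
        · exact h1
      · intro h; exact ⟨Or.inr h, hρ h⟩
  · intro σ hσ
    simp only [Finset.mem_filter, Finset.mem_powerset] at hσ
    ext x
    simp only [Finset.mem_union, Finset.mem_sdiff]
    have := Finset.ext_iff.1 hσ.2 x
    simp only [Finset.mem_inter] at this
    by_cases hx : x ∈ P <;> tauto
  · intro τ hτ
    simp only [Finset.mem_powerset] at hτ
    ext x
    simp only [Finset.mem_union, Finset.mem_sdiff]
    have : x ∈ τ → x ∉ P := fun h => (Finset.mem_sdiff.1 (hτ h)).2
    have : x ∈ ρ → x ∈ P := fun h => hρ h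
    by_cases hx : x ∈ P <;> tauto

/-- Harris / FKG inequality on the hypercube, counting version. -/
lemma harris (U : Finset α) (f g : Finset α → ℕ)
    (hf : ∀ s t, s ⊆ t → t ⊆ U → f s ≤ f t)
    (hg : ∀ s t, s ⊆ t → t ⊆ U → g t ≤ g s) :
    2 ^ U.card * ∑ s ∈ U.powerset, f s * g s ≤
      (∑ s ∈ U.powerset, f s) * (∑ s ∈ U.powerset, g s) := by
  classical
  induction U using Finset.induction_on generalizing f g with
  | empty => simp
  | insert a U ha ih =>
      rw [Finset.sum_powerset_insert ha, Finset.sum_powerset_insert ha,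
        Finset.sum_powerset_insert ha, Finset.card_insert_of_notMem ha]
      set F0 := ∑ s ∈ U.powerset, f s with hF0
      set F1 := ∑ s ∈ U.powerset, f (insert a s) with hF1
      set G0 := ∑ s ∈ U.powerset, g s with hG0
      set G1 := ∑ s ∈ U.powerset, g (insert a s) with hG1
      have sub_ins : ∀ s : Finset α, s ⊆ U → insert a s ⊆ insert a U :=
        fun s hs => Finset.insert_subset_insert a hs
      have h0 : 2 ^ U.card * ∑ s ∈ U.powerset, f s * g s ≤ F0 * G0 :=
        ih f g (fun s t hst htU => hf s t hst (htU.trans (Finset.subset_insert a U)))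
          (fun s t hst htU => hg s t hst (htU.trans (Finset.subset_insert a U)))
      have h1 : 2 ^ U.card * ∑ s ∈ U.powerset, f (insert a s) * g (insert a s) ≤ F1 * G1 :=
        ih (fun s => f (insert a s)) (fun s => g (insert a s))
          (fun s t hst htU => hf _ _ (Finset.insert_subset_insert a hst) (sub_ins t htU))
          (fun s t hst htU => hg _ _ (Finset.insert_subset_insert a hst) (sub_ins t htU))
      have hF : F0 ≤ F1 := by
        apply Finset.sum_le_sum
        intro s hs
        exact hf s (insert a s) (Finset.subset_insert a s)
          (sub_ins s (Finset.mem_powerset.1 hs))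
      have hG : G1 ≤ G0 := by
        apply Finset.sum_le_sum
        intro s hs
        exact hg s (insert a s) (Finset.subset_insert a s)
          (sub_ins s (Finset.mem_powerset.1 hs))
      have cheb : F0 * G0 + F1 * G1 ≤ F0 * G1 + F1 * G0 := by
        have hF' : (F0 : ℤ) ≤ F1 := by exact_mod_cast hF
        have hG' : (G1 : ℤ) ≤ G0 := by exact_mod_cast hG
        zify
        nlinarith [mul_nonneg (sub_nonneg.2 hF') (sub_nonneg.2 hG')]
      calc 2 ^ (U.card + 1) *
            ((∑ s ∈ U.powerset, f s * g s) + ∑ s ∈ U.powerset, f (insert a s) * g (insert a s))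
          = 2 * (2 ^ U.card * ∑ s ∈ U.powerset, f s * g s
              + 2 ^ U.card * ∑ s ∈ U.powerset, f (insert a s) * g (insert a s)) := by ring
        _ ≤ 2 * (F0 * G0 + F1 * G1) := by
            have := Nat.add_le_add h0 h1
            omega
        _ ≤ (F0 * G0 + F1 * G1) + (F0 * G1 + F1 * G0) := by omega
        _ = (F0 + F1) * (G0 + G1) := by ring

section Core

variable (T : ℕ) (L : ℕ → ℤ)

/-- endpoint of the `i`-th walk. -/
def ep (σ : Finset (ℤ × ℕ)) (i : ℕ) : ℤ := CW σ (L i) T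

/-- number of distinct endpoints among the first `m` walks. -/
def Dm (σ : Finset (ℤ × ℕ)) (m : ℕ) : ℕ := ((Finset.range m).image (ep T L σ)).card

variable {T L}
variable (hmono : Monotone L) (heven : ∀ i j, Even (L i - L j))

include hmono heven in
lemma ep_mono (σ : Finset (ℤ × ℕ)) : Monotone (ep T L σ) := by
  intro i j hij
  exact CW_noncross σ (hmono hij) (heven j i) T

lemma Dm_mono (σ : Finset (ℤ × ℕ)) : Monotone (Dm T L σ) := by
  intro m m' h
  exact Finset.card_le_card (Finset.image_subset_image (by
    intro x hx; simp only [Finset.mem_range] at hx ⊢; omega))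

lemma Dm_succ_le (σ : Finset (ℤ × ℕ)) (m : ℕ) : Dm T L σ (m + 1) ≤ Dm T L σ m + 1 := by
  unfold Dm
  rw [Finset.range_add_one, Finset.image_insert]
  exact Finset.card_insert_le _ _

lemma Dm_le (σ : Finset (ℤ × ℕ)) (m : ℕ) : Dm T L σ m ≤ m := by
  simpa [Dm] using Finset.card_image_le (s := Finset.range m) (f := ep T L σ)

lemma Dm_pos (σ : Finset (ℤ × ℕ)) {m : ℕ} (hm : 1 ≤ m) : 1 ≤ Dm T L σ m := by
  unfold Dm
  rw [Nat.one_le_iff_ne_zero, ← Nat.pos_iff_ne_zero, Finset.card_pos]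
  exact ⟨ep T L σ 0, Finset.mem_image.2 ⟨0, by simp; omega, rfl⟩⟩

include hmono heven in
lemma ep_mem_iff (σ : Finset (ℤ × ℕ)) {m : ℕ} (hm : 1 ≤ m) :
    ep T L σ m ∈ (Finset.range m).image (ep T L σ) ↔ ep T L σ m = ep T L σ (m - 1) := by
  constructor
  · rintro h
    obtain ⟨i, hi, hie⟩ := Finset.mem_image.1 h
    rw [Finset.mem_range] at hi
    have h1 : ep T L σ i ≤ ep T L σ (m - 1) := ep_mono hmono heven σ (by omega)
    have h2 : ep T L σ (m - 1) ≤ ep T L σ m := ep_mono hmono heven σ (by omega)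
    omega
  · intro h
    exact Finset.mem_image.2 ⟨m - 1, Finset.mem_range.2 (by omega), h.symm⟩

include hmono heven in
lemma Dm_succ_eq_add_one (σ : Finset (ℤ × ℕ)) {m : ℕ} (hm : 1 ≤ m)
    (h : ep T L σ (m - 1) < ep T L σ m) : Dm T L σ (m + 1) = Dm T L σ m + 1 := by
  unfold Dm
  rw [Finset.range_add_one, Finset.image_insert]
  rw [Finset.card_insert_of_notMem]
  rw [ep_mem_iff hmono heven σ hm]
  omega

include hmono heven in
lemma Dm_succ_eq_self (σ : Finset (ℤ × ℕ)) {m : ℕ} (hm : 1 ≤ m)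
    (h : ep T L σ m = ep T L σ (m - 1)) : Dm T L σ (m + 1) = Dm T L σ m := by
  unfold Dm
  rw [Finset.range_add_one, Finset.image_insert, Finset.insert_eq_self.2]
  exact (ep_mem_iff hmono heven σ hm).2 h

include hmono heven in
/-- the decomposition: if at least `k+1` endpoints are distinct, there is a first index
`r+1` at which the running count of distinct endpoints reaches `k`; then the `(r-1,r)` gap
is open and the `r`-th endpoint is strictly below the last one. -/
lemma decomposition (σ : Finset (ℤ × ℕ)) {n k : ℕ} (hk : 2 ≤ k)
    (h : k + 1 ≤ Dm T L σ n) :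
    ∃ r, 1 ≤ r ∧ r ≤ n - 2 ∧ Dm T L σ r = k - 1 ∧
      ep T L σ (r - 1) < ep T L σ r ∧ ep T L σ r < ep T L σ (n - 1) := by
  have hn3 : 3 ≤ n := by
    have := Dm_le (T := T) (L := L) σ n; omega
  have hex : ∃ m, k ≤ Dm T L σ m := ⟨n, by omega⟩
  classical
  set m := Nat.find hex with hm
  have hmk : k ≤ Dm T L σ m := Nat.find_spec hex
  have hmin : ∀ m', m' < m → Dm T L σ m' < k := by
    intro m' hm'
    have := Nat.find_min hex hm'
    omega
  have hm2 : 2 ≤ m := by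
    have := Dm_le (T := T) (L := L) σ m
    omega
  have hmn : m ≤ n := Nat.find_min' hex (by omega)
  set r := m - 1 with hr
  have hrm : r + 1 = m := by omega
  have hDmk : Dm T L σ m = k := by
    have h1 := Dm_succ_le (T := T) (L := L) σ r
    have h2 := hmin r (by omega)
    rw [hrm] at h1
    omega
  have hDr : Dm T L σ r = k - 1 := by
    have h1 := Dm_succ_le (T := T) (L := L) σ r
    have h2 := hmin r (by omega)
    rw [hrm] at h1
    omega
  have hstep : ep T L σ (r - 1) < ep T L σ r := by
    by_contra hc
    have heq : ep T L σ r = ep T L σ (r - 1) := by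
      have hle : ep T L σ (r - 1) ≤ ep T L σ r := ep_mono hmono heven σ (by omega)
      omega
    have := Dm_succ_eq_self hmono heven σ (show 1 ≤ r by omega) heq
    rw [hrm] at this
    omega
  have hmn' : m ≤ n - 1 := by
    rcases eq_or_lt_of_le hmn with hEq | hLt
    · rw [hEq] at hDmk; omega
    · omega
  have hlast : ep T L σ r < ep T L σ (n - 1) := by
    rcases lt_or_ge (ep T L σ r) (ep T L σ (n - 1)) with h' | h'
    · exact h'
    have heq : ep T L σ (n - 1) = ep T L σ r :=
      le_antisymm h' (ep_mono hmono heven σ (by omega))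
    have hsub : (Finset.range n).image (ep T L σ) ⊆ (Finset.range m).image (ep T L σ) := by
      intro x hx
      obtain ⟨i, hi, hix⟩ := Finset.mem_image.1 hx
      rw [Finset.mem_range] at hi
      rcases lt_or_ge i m with him | him
      · exact Finset.mem_image.2 ⟨i, Finset.mem_range.2 him, hix⟩
      · have e1 : ep T L σ r ≤ ep T L σ i := ep_mono hmono heven σ (by omega)
        have e2 : ep T L σ i ≤ ep T L σ (n - 1) := ep_mono hmono heven σ (by omega)
        have : ep T L σ i = ep T L σ r := by omega
        exact Finset.mem_image.2 ⟨r, Finset.mem_range.2 (by omega), by omega⟩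
    have : Dm T L σ n ≤ Dm T L σ m := Finset.card_le_card hsub
    omega
  exact ⟨r, by omega, by omega, hDr, hstep, hlast⟩

variable (T L) in
/-- the candidate boundary path with increment `+1` exactly at times in `s`, started at `L r`. -/
def pathFn (r : ℕ) (s : Finset ℕ) (t : ℕ) : ℤ :=
  L r + 2 * ((s ∩ Finset.range t).card : ℤ) - t

variable (T L) in
/-- the set of times at which the `r`-th walk steps up. -/
def dcfg (r : ℕ) (σ : Finset (ℤ × ℕ)) : Finset ℕ :=
  (Finset.range T).filter (fun t => (CW σ (L r) t, t) ∈ σ)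

lemma pathFn_zero (r : ℕ) (s : Finset ℕ) : pathFn L r s 0 = L r := by
  simp [pathFn]

lemma pathFn_succ (r : ℕ) (s : Finset ℕ) (t : ℕ) :
    pathFn L r s (t + 1) = pathFn L r s t + (if t ∈ s then 1 else -1) := by
  unfold pathFn
  rw [Finset.inter_comm, Finset.range_add_one]
  by_cases hts : t ∈ s
  · rw [Finset.insert_inter_of_mem hts,
      Finset.card_insert_of_notMem (by simp), if_pos hts, Finset.inter_comm]
    push_cast; ring
  · rw [Finset.insert_inter_of_notMem hts, if_neg hts, Finset.inter_comm]
    push_cast; ring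

lemma pathFn_dist (r : ℕ) (s : Finset ℕ) (t : ℕ) : |pathFn L r s t - L r| ≤ t := by
  unfold pathFn
  have h1 : (s ∩ Finset.range t).card ≤ t := by
    calc (s ∩ Finset.range t).card ≤ (Finset.range t).card :=
          Finset.card_le_card (Finset.inter_subset_right)
      _ = t := Finset.card_range t
  rw [abs_le]
  constructor <;> push_cast <;> omega

lemma pathFn_mono (r : ℕ) {s s' : Finset ℕ} (h : s ⊆ s') (t : ℕ) :
    pathFn L r s t ≤ pathFn L r s' t := by
  unfold pathFn
  have : (s ∩ Finset.range t).card ≤ (s' ∩ Finset.range t).card :=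
    Finset.card_le_card (Finset.inter_subset_inter_right h)
  omega

lemma dcfg_subset (r : ℕ) (σ : Finset (ℤ × ℕ)) : dcfg T L r σ ⊆ Finset.range T :=
  Finset.filter_subset _ _

lemma walkpath (r : ℕ) (σ : Finset (ℤ × ℕ)) :
    ∀ t, t ≤ T → CW σ (L r) t = pathFn L r (dcfg T L r σ) t := by
  intro t
  induction t with
  | zero => intro _; rw [pathFn_zero, CW_zero]
  | succ t ih =>
      intro ht
      have ht' : t < T := by omega
      rw [CW_succ, pathFn_succ]
      have hstep : cf (CW σ (L r) t) t σ = (if t ∈ dcfg T L r σ then 1 else -1) := by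
        unfold cf dcfg
        simp only [Finset.mem_filter, Finset.mem_range]
        by_cases hm : (CW σ (L r) t, t) ∈ σ
        · rw [if_pos hm, if_pos ⟨ht', hm⟩]
        · rw [if_neg hm, if_neg (by tauto)]
      rw [hstep, ih (by omega)]

variable (T L) in
def Cpath (r : ℕ) (s : Finset ℕ) : Finset (ℤ × ℕ) :=
  (Finset.range T).image (fun t => (pathFn L r s t, t))

variable (L) in
def rhoPath (r : ℕ) (s : Finset ℕ) : Finset (ℤ × ℕ) :=
  s.image (fun t => (pathFn L r s t, t))

lemma rhoPath_subset {r : ℕ} {s : Finset ℕ} (hs : s ⊆ Finset.range T) :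
    rhoPath L r s ⊆ Cpath T L r s :=
  Finset.image_subset_image hs

lemma Cpath_card (r : ℕ) (s : Finset ℕ) : (Cpath T L r s).card = T := by
  rw [Cpath, Finset.card_image_of_injective _ (fun a b h => congrArg Prod.snd h),
    Finset.card_range]

lemma dcfg_eq_iff {r : ℕ} {s : Finset ℕ} (hs : s ⊆ Finset.range T) (σ : Finset (ℤ × ℕ)) :
    dcfg T L r σ = s ↔ σ ∩ Cpath T L r s = rhoPath L r s := by
  constructor
  · intro h
    subst h
    ext w
    simp only [Finset.mem_inter, Cpath, rhoPath, Finset.mem_image, Finset.mem_range]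
    constructor
    · rintro ⟨hσ, t, ht, rfl⟩
      refine ⟨t, ?_, rfl⟩
      have hw : pathFn L r (dcfg T L r σ) t = CW σ (L r) t := (walkpath r σ t (by omega)).symm
      unfold dcfg
      rw [Finset.mem_filter, Finset.mem_range]
      exact ⟨ht, by rwa [← hw]⟩
    · rintro ⟨t, htd, rfl⟩
      have ht : t < T := Finset.mem_range.1 (dcfg_subset r σ htd)
      have hw : pathFn L r (dcfg T L r σ) t = CW σ (L r) t := (walkpath r σ t (by omega)).symm
      unfold dcfg at htd
      rw [Finset.mem_filter] at htd
      exact ⟨by rw [hw]; exact htd.2, t, ht, rfl⟩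
  · intro hC
    have hmem : ∀ x, x ∈ Cpath T L r s → (x ∈ σ ↔ x ∈ rhoPath L r s) := by
      intro x hx
      have := Finset.ext_iff.1 hC x
      simp only [Finset.mem_inter] at this
      tauto
    have hrho : ∀ t, (pathFn L r s t, t) ∈ rhoPath L r s ↔ t ∈ s := by
      intro t
      simp only [rhoPath, Finset.mem_image]
      constructor
      · rintro ⟨t', ht', heq⟩
        have ht2 : t' = t := congrArg Prod.snd heq
        exact ht2 ▸ ht'
      · intro h; exact ⟨t, h, rfl⟩
    have key : ∀ t, t ≤ T → CW σ (L r) t = pathFn L r s t := by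
      intro t
      induction t with
      | zero => intro _; rw [pathFn_zero, CW_zero]
      | succ t ih =>
          intro ht
          have ht' : t < T := by omega
          have hCt : (pathFn L r s t, t) ∈ Cpath T L r s := by
            simp only [Cpath, Finset.mem_image, Finset.mem_range]
            exact ⟨t, ht', rfl⟩
          rw [CW_succ, pathFn_succ, ih (by omega)]
          unfold cf
          by_cases hσt : (pathFn L r s t, t) ∈ σ
          · rw [if_pos hσt, if_pos ((hrho t).1 ((hmem _ hCt).1 hσt))]
          · rw [if_neg hσt, if_neg (fun hts => hσt ((hmem _ hCt).2 ((hrho t).2 hts)))]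
  -- now conclude dcfg = s
    ext t
    unfold dcfg
    rw [Finset.mem_filter, Finset.mem_range]
    constructor
    · rintro ⟨ht, hσt⟩
      rw [key t (by omega)] at hσt
      exact (hrho t).1 ((hmem _ (by
        simp only [Cpath, Finset.mem_image, Finset.mem_range]; exact ⟨t, ht, rfl⟩)).1 hσt)
    · intro hts
      have ht : t < T := Finset.mem_range.1 (hs hts)
      refine ⟨ht, ?_⟩
      rw [key t (by omega)]
      exact (hmem _ (by
        simp only [Cpath, Finset.mem_image, Finset.mem_range]; exact ⟨t, ht, rfl⟩)).2
        ((hrho t).2 hts)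

variable (W : Finset (ℤ × ℕ))

variable (T L) in
def fib (r : ℕ) (s : Finset ℕ) : Finset (Finset (ℤ × ℕ)) :=
  W.powerset.filter (fun σ => dcfg T L r σ = s)

variable (T L) in
def AEv (k r : ℕ) : Finset (Finset (ℤ × ℕ)) :=
  W.powerset.filter (fun σ => Dm T L σ r = k - 1 ∧ ep T L σ (r - 1) < ep T L σ r)

variable (T L) in
def BEv (n r : ℕ) : Finset (Finset (ℤ × ℕ)) :=
  W.powerset.filter (fun σ => ep T L σ r < ep T L σ (n - 1))

variable (T L) in
def ALs (k r : ℕ) (s : Finset ℕ) : Finset (Finset (ℤ × ℕ)) :=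
  W.powerset.filter
    (fun σ => Dm T L σ r = k - 1 ∧ ∀ t, t ≤ T → CW σ (L (r - 1)) t < pathFn L r s t)

variable (T L) in
def BRs (n r : ℕ) (s : Finset ℕ) : Finset (Finset (ℤ × ℕ)) :=
  W.powerset.filter (fun σ => ∀ t, t ≤ T → pathFn L r s t < CW σ (L (n - 1)) t)

variable (T L) in
def PLs (r : ℕ) (s : Finset ℕ) : Finset (ℤ × ℕ) :=
  W.filter (fun w => (w.1 : ℤ) < pathFn L r s w.2)

variable (T L) in
def PRs (r : ℕ) (s : Finset ℕ) : Finset (ℤ × ℕ) :=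
  W.filter (fun w => pathFn L r s w.2 < w.1)

variable {W}
variable {n : ℕ}
variable (hW : ∀ i, i < n → ∀ (z : ℤ) (t : ℕ), t < T → |z - L i| ≤ (t : ℤ) → (z, t) ∈ W)

include hW in
lemma Cpath_subW {r : ℕ} (hrn : r < n) (s : Finset ℕ) : Cpath T L r s ⊆ W := by
  intro w hw
  simp only [Cpath, Finset.mem_image, Finset.mem_range] at hw
  obtain ⟨t, ht, rfl⟩ := hw
  exact hW r hrn _ t ht (pathFn_dist r s t)

include hW in
lemma T_le_card (hn : 0 < n) : T ≤ W.card := by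
  have h := Finset.card_le_card (Cpath_subW hW (r := 0) hn ∅)
  rwa [Cpath_card] at h

include hW in
lemma fib_card {r : ℕ} (hrn : r < n) {s : Finset ℕ} (hs : s ⊆ Finset.range T) :
    (fib T L W r s).card = 2 ^ (W.card - T) := by
  have hEq : fib T L W r s = W.powerset.filter (fun σ => σ ∩ Cpath T L r s = rhoPath L r s) := by
    ext σ
    simp only [fib, Finset.mem_filter]
    exact and_congr_right fun _ => dcfg_eq_iff hs σ
  rw [hEq, fiber_count (Cpath_subW hW hrn s) (rhoPath_subset hs), Cpath_card]

lemma det_fib {r : ℕ} {s : Finset ℕ} (hs : s ⊆ Finset.range T) :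
    Det W (Cpath T L r s) (fib T L W r s) := by
  intro σ τ hσ hτ h
  simp only [fib, Finset.mem_filter, Finset.mem_powerset, hσ, hτ, true_and]
  rw [dcfg_eq_iff hs σ, dcfg_eq_iff hs τ, h]

include hmono heven hW in
lemma AL_transfer {r k : ℕ} (hr1 : 1 ≤ r) (hrn : r < n) {s : Finset ℕ}
    {σ τ : Finset (ℤ × ℕ)} (hσ : σ ⊆ W) (hτ : τ ⊆ W)
    (hagree : σ ∩ PLs L W r s = τ ∩ PLs L W r s)
    (hD : Dm T L σ r = k - 1)
    (hstay : ∀ t, t ≤ T → CW σ (L (r - 1)) t < pathFn L r s t) :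
    Dm T L τ r = k - 1 ∧ ∀ t, t ≤ T → CW τ (L (r - 1)) t < pathFn L r s t := by
  have key : ∀ t, t ≤ T → ∀ i, i < r → CW σ (L i) t = CW τ (L i) t := by
    intro t
    induction t with
    | zero => intro _ i _; rw [CW_zero, CW_zero]
    | succ t ih =>
        intro ht i hi
        have ht' : t < T := by omega
        have hIH := ih (by omega)
        have hIHi := hIH i hi
        have h1 : CW σ (L i) t ≤ CW σ (L (r - 1)) t :=
          CW_noncross σ (hmono (show i ≤ r - 1 by omega)) (heven (r - 1) i) t
        have h2 : CW σ (L i) t < pathFn L r s t := lt_of_le_of_lt h1 (hstay t (by omega))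
        have h3 : (CW σ (L i) t, t) ∈ W := hW i (by omega) _ t ht' (CW_dist σ (L i) t)
        have h4 : (CW σ (L i) t, t) ∈ PLs L W r s := by
          simp only [PLs, Finset.mem_filter]
          exact ⟨h3, h2⟩
        have h5 : ((CW σ (L i) t, t) ∈ σ) ↔ ((CW σ (L i) t, t) ∈ τ) := by
          have hh := Finset.ext_iff.1 hagree (CW σ (L i) t, t)
          simp only [Finset.mem_inter] at hh
          constructor
          · intro hx; exact (hh.1 ⟨hx, h4⟩).1
          · intro hx; exact (hh.2 ⟨hx, h4⟩).1
        rw [CW_succ, CW_succ, ← hIHi]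
        congr 1
        unfold cf
        by_cases hm : (CW σ (L i) t, t) ∈ σ
        · rw [if_pos hm, if_pos (h5.1 hm)]
        · rw [if_neg hm, if_neg (fun hx => hm (h5.2 hx))]
  constructor
  · rw [← hD]
    unfold Dm
    congr 1
    apply Finset.image_congr
    intro i hi
    rw [Finset.mem_coe, Finset.mem_range] at hi
    unfold ep
    exact (key T le_rfl i hi).symm
  · intro t ht
    rw [← key t ht (r - 1) (by omega)]
    exact hstay t ht

include hmono heven hW in
lemma det_AL {r k : ℕ} (hr1 : 1 ≤ r) (hrn : r < n) (s : Finset ℕ) :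
    Det W (PLs L W r s) (ALs T L W k r s) := by
  intro σ τ hσ hτ h
  simp only [ALs, Finset.mem_filter, Finset.mem_powerset, hσ, hτ, true_and]
  constructor
  · rintro ⟨h1, h2⟩
    exact AL_transfer hmono heven hW hr1 hrn hσ hτ h h1 h2
  · rintro ⟨h1, h2⟩
    exact AL_transfer hmono heven hW hr1 hrn hτ hσ h.symm h1 h2

include hmono heven hW in
lemma BR_transfer {r : ℕ} (hrn : r < n) {s : Finset ℕ}
    {σ τ : Finset (ℤ × ℕ)} (hσ : σ ⊆ W) (hτ : τ ⊆ W)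
    (hagree : σ ∩ PRs L W r s = τ ∩ PRs L W r s)
    (hstay : ∀ t, t ≤ T → pathFn L r s t < CW σ (L (n - 1)) t) :
    ∀ t, t ≤ T → pathFn L r s t < CW τ (L (n - 1)) t := by
  have key : ∀ t, t ≤ T → CW σ (L (n - 1)) t = CW τ (L (n - 1)) t := by
    intro t
    induction t with
    | zero => intro _; rw [CW_zero, CW_zero]
    | succ t ih =>
        intro ht
        have ht' : t < T := by omega
        have hIH := ih (by omega)
        have h2 : pathFn L r s t < CW σ (L (n - 1)) t := hstay t (by omega)
        have h3 : (CW σ (L (n - 1)) t, t) ∈ W := hW (n - 1) (by omega) _ t ht'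
          (CW_dist σ (L (n - 1)) t)
        have h4 : (CW σ (L (n - 1)) t, t) ∈ PRs L W r s := by
          simp only [PRs, Finset.mem_filter]
          exact ⟨h3, h2⟩
        have h5 : ((CW σ (L (n - 1)) t, t) ∈ σ) ↔ ((CW σ (L (n - 1)) t, t) ∈ τ) := by
          have hh := Finset.ext_iff.1 hagree (CW σ (L (n - 1)) t, t)
          simp only [Finset.mem_inter] at hh
          constructor
          · intro hx; exact (hh.1 ⟨hx, h4⟩).1
          · intro hx; exact (hh.2 ⟨hx, h4⟩).1
        rw [CW_succ, CW_succ, ← hIH]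
        congr 1
        unfold cf
        by_cases hm : (CW σ (L (n - 1)) t, t) ∈ σ
        · rw [if_pos hm, if_pos (h5.1 hm)]
        · rw [if_neg hm, if_neg (fun hx => hm (h5.2 hx))]
  intro t ht
  rw [← key t ht]
  exact hstay t ht

include hmono heven hW in
lemma det_BR {r : ℕ} (hrn : r < n) (s : Finset ℕ) :
    Det W (PRs L W r s) (BRs T L W n r s) := by
  intro σ τ hσ hτ h
  simp only [BRs, Finset.mem_filter, Finset.mem_powerset, hσ, hτ, true_and]
  constructor
  · intro h1
    exact BR_transfer hmono heven hW hrn hσ hτ h h1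
  · intro h1
    exact BR_transfer hmono heven hW hrn hτ hσ h.symm h1

include hmono heven in
lemma memA_iff {r k : ℕ} (hr1 : 1 ≤ r) {s : Finset ℕ} {σ : Finset (ℤ × ℕ)}
    (hd : dcfg T L r σ = s) : σ ∈ AEv T L W k r ↔ σ ∈ ALs T L W k r s := by
  simp only [AEv, ALs, Finset.mem_filter]
  refine and_congr_right fun _ => and_congr_right fun _ => ?_
  have hlt := CW_lt_iff σ (hmono (show r - 1 ≤ r by omega)) (heven r (r - 1)) (T := T)
  unfold ep
  rw [hlt]
  apply forall_congr'
  intro t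
  apply imp_congr_right
  intro ht
  rw [walkpath r σ t ht, hd]

include hmono heven in
lemma memB_iff {r : ℕ} (hrn : r < n) {s : Finset ℕ} {σ : Finset (ℤ × ℕ)}
    (hd : dcfg T L r σ = s) : σ ∈ BEv T L W n r ↔ σ ∈ BRs T L W n r s := by
  simp only [BEv, BRs, Finset.mem_filter]
  refine and_congr_right fun _ => ?_
  have hlt := CW_lt_iff σ (hmono (show r ≤ n - 1 by omega)) (heven (n - 1) r) (T := T)
  unfold ep
  rw [hlt]
  apply forall_congr'
  intro t
  apply imp_congr_right
  intro ht
  rw [walkpath r σ t ht, hd]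

lemma disj_PL_PR (r : ℕ) (s : Finset ℕ) : Disjoint (PLs L W r s) (PRs L W r s) := by
  rw [Finset.disjoint_left]
  intro w hw hw'
  simp only [PLs, PRs, Finset.mem_filter] at hw hw'
  omega

lemma disj_PLR_C (r : ℕ) (s : Finset ℕ) :
    Disjoint (PLs L W r s ∪ PRs L W r s) (Cpath T L r s) := by
  rw [Finset.disjoint_right]
  intro w hw
  simp only [Cpath, Finset.mem_image, Finset.mem_range] at hw
  obtain ⟨t, ht, rfl⟩ := hw
  simp only [Finset.mem_union, PLs, PRs, Finset.mem_filter]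
  omega

lemma ALs_mono {k r : ℕ} {s s' : Finset ℕ} (hss : s ⊆ s') :
    ALs T L W k r s ⊆ ALs T L W k r s' := by
  intro σ hσ
  simp only [ALs, Finset.mem_filter] at hσ ⊢
  exact ⟨hσ.1, hσ.2.1, fun t ht => lt_of_lt_of_le (hσ.2.2 t ht) (pathFn_mono r hss t)⟩

lemma BRs_anti {r : ℕ} {s s' : Finset ℕ} (hss : s ⊆ s') :
    BRs T L W n r s' ⊆ BRs T L W n r s := by
  intro σ hσ
  simp only [BRs, Finset.mem_filter] at hσ ⊢
  exact ⟨hσ.1, fun t ht => lt_of_le_of_lt (pathFn_mono r hss t) (hσ.2 t ht)⟩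

include hmono heven hW in
lemma core_r {k r : ℕ} (hr1 : 1 ≤ r) (hrn : r + 1 < n) :
    (AEv T L W k r ∩ BEv T L W n r).card * 2 ^ W.card ≤
      (AEv T L W k r).card * (BEv T L W n r).card := by
  classical
  have hrn' : r < n := by omega
  have hn1 : 0 < n := by omega
  set N := W.card with hN
  have hTN : T ≤ N := T_le_card hW hn1
  set P := (Finset.range T).powerset with hP
  -- fiberwise decomposition
  have hfib : ∀ X : Finset (Finset (ℤ × ℕ)), X ⊆ W.powerset →
      X.card = ∑ s ∈ P, (X.filter (fun σ => dcfg T L r σ = s)).card := by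
    intro X hX
    apply Finset.card_eq_sum_card_fiberwise
    intro σ _
    exact Finset.mem_powerset.2 (dcfg_subset r σ)
  have hAp : AEv T L W k r ⊆ W.powerset := Finset.filter_subset _ _
  have hBp : BEv T L W n r ⊆ W.powerset := Finset.filter_subset _ _
  have hALp : ∀ s, ALs T L W k r s ⊆ W.powerset := fun s => Finset.filter_subset _ _
  have hBRp : ∀ s, BRs T L W n r s ⊆ W.powerset := fun s => Finset.filter_subset _ _
  have hfibp : ∀ s, fib T L W r s ⊆ W.powerset := fun s => Finset.filter_subset _ _
  -- per-fiber event identification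
  have eqA : ∀ {s : Finset ℕ}, s ⊆ Finset.range T →
      (AEv T L W k r).filter (fun σ => dcfg T L r σ = s) =
        ALs T L W k r s ∩ fib T L W r s := by
    intro s hs
    ext σ
    simp only [Finset.mem_filter, Finset.mem_inter, fib]
    constructor
    · rintro ⟨hσA, hd⟩
      have hσp : σ ∈ W.powerset := hAp hσA
      exact ⟨(memA_iff hmono heven hr1 hd).1 hσA, hσp, hd⟩
    · rintro ⟨hσAL, hσp, hd⟩
      exact ⟨(memA_iff hmono heven hr1 hd).2 hσAL, hd⟩
  have eqB : ∀ {s : Finset ℕ}, s ⊆ Finset.range T →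
      (BEv T L W n r).filter (fun σ => dcfg T L r σ = s) =
        BRs T L W n r s ∩ fib T L W r s := by
    intro s hs
    ext σ
    simp only [Finset.mem_filter, Finset.mem_inter, fib]
    constructor
    · rintro ⟨hσB, hd⟩
      have hσp : σ ∈ W.powerset := hBp hσB
      exact ⟨(memB_iff hmono heven hrn' hd).1 hσB, hσp, hd⟩
    · rintro ⟨hσBR, hσp, hd⟩
      exact ⟨(memB_iff hmono heven hrn' hd).2 hσBR, hd⟩
  have eqAB : ∀ {s : Finset ℕ}, s ⊆ Finset.range T →
      (AEv T L W k r ∩ BEv T L W n r).filter (fun σ => dcfg T L r σ = s) =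
        (ALs T L W k r s ∩ BRs T L W n r s) ∩ fib T L W r s := by
    intro s hs
    ext σ
    simp only [Finset.mem_filter, Finset.mem_inter, fib]
    constructor
    · rintro ⟨⟨hσA, hσB⟩, hd⟩
      have hσp : σ ∈ W.powerset := hAp hσA
      exact ⟨⟨(memA_iff hmono heven hr1 hd).1 hσA, (memB_iff hmono heven hrn' hd).1 hσB⟩,
        hσp, hd⟩
    · rintro ⟨⟨hσAL, hσBR⟩, hσp, hd⟩
      exact ⟨⟨(memA_iff hmono heven hr1 hd).2 hσAL, (memB_iff hmono heven hrn' hd).2 hσBR⟩, hd⟩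
  -- product counts
  have cA : ∀ {s : Finset ℕ}, s ⊆ Finset.range T →
      (ALs T L W k r s ∩ fib T L W r s).card * 2 ^ N =
        (ALs T L W k r s).card * 2 ^ (N - T) := by
    intro s hs
    rw [det_prod (hALp s) (hfibp s) (det_AL hmono heven hW hr1 hrn' s) (det_fib hs)
      (Finset.disjoint_union_left.1 (disj_PLR_C r s)).1, fib_card hW hrn' hs]
  have cB : ∀ {s : Finset ℕ}, s ⊆ Finset.range T →
      (BRs T L W n r s ∩ fib T L W r s).card * 2 ^ N =
        (BRs T L W n r s).card * 2 ^ (N - T) := by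
    intro s hs
    rw [det_prod (hBRp s) (hfibp s) (det_BR hmono heven hW hrn' s) (det_fib hs)
      (Finset.disjoint_union_left.1 (disj_PLR_C r s)).2, fib_card hW hrn' hs]
  have cAB2 : ∀ {s : Finset ℕ}, s ⊆ Finset.range T →
      (ALs T L W k r s ∩ BRs T L W n r s).card * 2 ^ N =
        (ALs T L W k r s).card * (BRs T L W n r s).card := by
    intro s hs
    exact det_prod (hALp s) (hBRp s) (det_AL hmono heven hW hr1 hrn' s)
      (det_BR hmono heven hW hrn' s) (disj_PL_PR r s)
  have cABf : ∀ {s : Finset ℕ}, s ⊆ Finset.range T →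
      ((ALs T L W k r s ∩ BRs T L W n r s) ∩ fib T L W r s).card * 2 ^ N =
        (ALs T L W k r s ∩ BRs T L W n r s).card * 2 ^ (N - T) := by
    intro s hs
    rw [det_prod (fun σ hσ => hALp s (Finset.mem_of_mem_inter_left hσ)) (hfibp s)
      (Det.inter (det_AL hmono heven hW hr1 hrn' s) (det_BR hmono heven hW hrn' s))
      (det_fib hs) (disj_PLR_C r s), fib_card hW hrn' hs]
  -- sums
  set aa : Finset ℕ → ℕ := fun s => (ALs T L W k r s).card with haa
  set bb : Finset ℕ → ℕ := fun s => (BRs T L W n r s).card with hbb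
  set X := (AEv T L W k r ∩ BEv T L W n r).card with hX
  set A := (AEv T L W k r).card with hA
  set B := (BEv T L W n r).card with hB
  set S1 := ∑ s ∈ P, aa s with hS1
  set S2 := ∑ s ∈ P, bb s with hS2
  set S3 := ∑ s ∈ P, aa s * bb s with hS3
  have E2 : A * 2 ^ N = S1 * 2 ^ (N - T) := by
    rw [hA, hfib _ hAp, Finset.sum_mul, hS1, Finset.sum_mul]
    apply Finset.sum_congr rfl
    intro s hsP
    rw [eqA (Finset.mem_powerset.1 hsP), cA (Finset.mem_powerset.1 hsP)]
  have E3 : B * 2 ^ N = S2 * 2 ^ (N - T) := by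
    rw [hB, hfib _ hBp, Finset.sum_mul, hS2, Finset.sum_mul]
    apply Finset.sum_congr rfl
    intro s hsP
    rw [eqB (Finset.mem_powerset.1 hsP), cB (Finset.mem_powerset.1 hsP)]
  have E1 : X * (2 ^ N * 2 ^ N) = S3 * 2 ^ (N - T) := by
    have hXsub : AEv T L W k r ∩ BEv T L W n r ⊆ W.powerset :=
      fun σ hσ => hAp (Finset.mem_of_mem_inter_left hσ)
    rw [hX, hfib _ hXsub, Finset.sum_mul, hS3, Finset.sum_mul]
    apply Finset.sum_congr rfl
    intro s hsP
    have hs := Finset.mem_powerset.1 hsP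
    calc ((AEv T L W k r ∩ BEv T L W n r).filter (fun σ => dcfg T L r σ = s)).card *
          (2 ^ N * 2 ^ N)
        = (((ALs T L W k r s ∩ BRs T L W n r s) ∩ fib T L W r s).card * 2 ^ N) * 2 ^ N := by
          rw [eqAB hs]; ring
      _ = ((ALs T L W k r s ∩ BRs T L W n r s).card * 2 ^ N) * 2 ^ (N - T) := by
          rw [cABf hs]; ring
      _ = aa s * bb s * 2 ^ (N - T) := by rw [cAB2 hs]
  -- Harris inequality
  have hH : 2 ^ T * S3 ≤ S1 * S2 := by
    have := harris (Finset.range T) aa bb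
      (fun s t hst htU => Finset.card_le_card (ALs_mono hst))
      (fun s t hst htU => Finset.card_le_card (BRs_anti hst))
    rwa [Finset.card_range] at this
  -- assemble
  have hpow : 2 ^ (N - T) * 2 ^ T = 2 ^ N := by
    rw [← pow_add]
    congr 1
    omega
  have key : X * 2 ^ N * (2 ^ N * 2 ^ N * 2 ^ T) ≤ A * B * (2 ^ N * 2 ^ N * 2 ^ T) := by
    have e1 : X * 2 ^ N * (2 ^ N * 2 ^ N * 2 ^ T) = (X * (2 ^ N * 2 ^ N)) * (2 ^ N * 2 ^ T) := by
      ring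
    have e2 : A * B * (2 ^ N * 2 ^ N * 2 ^ T) = (A * 2 ^ N) * (B * 2 ^ N) * 2 ^ T := by ring
    rw [e1, e2, E1, E2, E3]
    calc S3 * 2 ^ (N - T) * (2 ^ N * 2 ^ T)
        = (2 ^ T * S3) * (2 ^ (N - T) * 2 ^ N) := by ring
      _ ≤ (S1 * S2) * (2 ^ (N - T) * 2 ^ N) := Nat.mul_le_mul_right _ hH
      _ = S1 * 2 ^ (N - T) * (S2 * 2 ^ (N - T)) * 2 ^ T := by rw [← hpow]; ring
  exact Nat.le_of_mul_le_mul_right key (by positivity)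

include hmono heven in
lemma AEv_disj {k r r' : ℕ} (hk : 2 ≤ k) (hr1 : 1 ≤ r) (hr1' : 1 ≤ r')
    (hne : r ≠ r') : Disjoint (AEv T L W k r) (AEv T L W k r') := by
  -- wlog r < r'
  have main : ∀ {u v : ℕ}, 1 ≤ u → u < v → Disjoint (AEv T L W k u) (AEv T L W k v) := by
    intro u v hu huv
    rw [Finset.disjoint_left]
    intro σ hσu hσv
    simp only [AEv, Finset.mem_filter] at hσu hσv
    have h1 : Dm T L σ (u + 1) = Dm T L σ u + 1 :=
      Dm_succ_eq_add_one hmono heven σ hu hσu.2.2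
    have h2 : Dm T L σ (u + 1) ≤ Dm T L σ v := Dm_mono σ (by omega)
    have := hσu.2.1
    have := hσv.2.1
    omega
  rcases Nat.lt_or_ge r r' with h | h
  · exact main hr1 h
  · exact (main hr1' (by omega)).symm

include hmono heven hW in
theorem cube_core {k : ℕ} (hk : 1 ≤ k) (hn : 1 ≤ n) :
    (W.powerset.filter (fun σ => k + 1 ≤ Dm T L σ n)).card * 2 ^ W.card ≤
      (W.powerset.filter (fun σ => k ≤ Dm T L σ n)).card *
        (W.powerset.filter (fun σ => 2 ≤ Dm T L σ n)).card := by
  classical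
  rcases eq_or_lt_of_le hk with hk1 | hk2
  · -- k = 1
    have hfull : W.powerset.filter (fun σ => k ≤ Dm T L σ n) = W.powerset := by
      apply Finset.filter_true_of_mem
      intro σ _
      rw [← hk1]
      exact Dm_pos σ hn
    rw [hfull, Finset.card_powerset, ← hk1]
    exact le_of_eq (mul_comm _ _)
  · -- 2 ≤ k
    have hk2' : 2 ≤ k := hk2
    rcases Nat.lt_or_ge n (k + 1) with hnk | hnk
    · -- n ≤ k : left side is zero
      have hempty : W.powerset.filter (fun σ => k + 1 ≤ Dm T L σ n) = ∅ := by
        apply Finset.filter_false_of_mem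
        intro σ _
        have := Dm_le (T := T) (L := L) σ n
        omega
      rw [hempty]
      simp
    · -- main case : k + 1 ≤ n
      set R := Finset.Icc 1 (n - 2) with hR
      have hsub : W.powerset.filter (fun σ => k + 1 ≤ Dm T L σ n) ⊆
          R.biUnion (fun r => AEv T L W k r ∩ BEv T L W n r) := by
        intro σ hσ
        rw [Finset.mem_filter] at hσ
        obtain ⟨r, hr1, hrn2, hD, hstep, hlast⟩ :=
          decomposition hmono heven σ hk2' hσ.2
        rw [Finset.mem_biUnion]
        refine ⟨r, Finset.mem_Icc.2 ⟨hr1, hrn2⟩, ?_⟩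
        rw [Finset.mem_inter]
        constructor
        · simp only [AEv, Finset.mem_filter]
          exact ⟨hσ.1, hD, hstep⟩
        · simp only [BEv, Finset.mem_filter]
          exact ⟨hσ.1, hlast⟩
      have step1 : (W.powerset.filter (fun σ => k + 1 ≤ Dm T L σ n)).card ≤
          ∑ r ∈ R, (AEv T L W k r ∩ BEv T L W n r).card :=
        le_trans (Finset.card_le_card hsub) (Finset.card_biUnion_le)
      have hBEv_sub : ∀ r ∈ R, (BEv T L W n r).card ≤
          (W.powerset.filter (fun σ => 2 ≤ Dm T L σ n)).card := by
        intro r hr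
        rw [Finset.mem_Icc] at hr
        apply Finset.card_le_card
        intro σ hσ
        simp only [BEv, Finset.mem_filter] at hσ
        rw [Finset.mem_filter]
        refine ⟨hσ.1, ?_⟩
        have h2 : 1 < ((Finset.range n).image (ep T L σ)).card := by
          rw [Finset.one_lt_card]
          refine ⟨ep T L σ r, ?_, ep T L σ (n - 1), ?_, ne_of_lt hσ.2⟩
          · exact Finset.mem_image.2 ⟨r, Finset.mem_range.2 (by omega), rfl⟩
          · exact Finset.mem_image.2 ⟨n - 1, Finset.mem_range.2 (by omega), rfl⟩
        exact h2
      have hAEv_sub : R.biUnion (fun r => AEv T L W k r) ⊆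
          W.powerset.filter (fun σ => k ≤ Dm T L σ n) := by
        intro σ hσ
        rw [Finset.mem_biUnion] at hσ
        obtain ⟨r, hrR, hσr⟩ := hσ
        rw [Finset.mem_Icc] at hrR
        simp only [AEv, Finset.mem_filter] at hσr
        rw [Finset.mem_filter]
        refine ⟨hσr.1, ?_⟩
        have h1 : Dm T L σ (r + 1) = Dm T L σ r + 1 :=
          Dm_succ_eq_add_one hmono heven σ hrR.1 hσr.2.2
        have h2 : Dm T L σ (r + 1) ≤ Dm T L σ n := Dm_mono σ (by omega)
        have := hσr.2.1
        omega
      have hAEv_card : ∑ r ∈ R, (AEv T L W k r).card ≤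
          (W.powerset.filter (fun σ => k ≤ Dm T L σ n)).card := by
        rw [← Finset.card_biUnion]
        · exact Finset.card_le_card hAEv_sub
        · intro r hr r' hr' hne
          rw [Finset.mem_coe, Finset.mem_Icc] at hr hr'
          exact AEv_disj hmono heven hk2' hr.1 hr'.1 hne
      calc (W.powerset.filter (fun σ => k + 1 ≤ Dm T L σ n)).card * 2 ^ W.card
          ≤ (∑ r ∈ R, (AEv T L W k r ∩ BEv T L W n r).card) * 2 ^ W.card :=
            Nat.mul_le_mul_right _ step1
        _ = ∑ r ∈ R, (AEv T L W k r ∩ BEv T L W n r).card * 2 ^ W.card := by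
            rw [Finset.sum_mul]
        _ ≤ ∑ r ∈ R, (AEv T L W k r).card * (BEv T L W n r).card := by
            apply Finset.sum_le_sum
            intro r hr
            rw [Finset.mem_Icc] at hr
            exact core_r hmono heven hW hr.1 (by omega)
        _ ≤ ∑ r ∈ R, (AEv T L W k r).card *
              (W.powerset.filter (fun σ => 2 ≤ Dm T L σ n)).card := by
            apply Finset.sum_le_sum
            intro r hr
            exact Nat.mul_le_mul_left _ (hBEv_sub r hr)
        _ = (∑ r ∈ R, (AEv T L W k r).card) *
              (W.powerset.filter (fun σ => 2 ≤ Dm T L σ n)).card := by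
            rw [Finset.sum_mul]
        _ ≤ (W.powerset.filter (fun σ => k ≤ Dm T L σ n)).card *
              (W.powerset.filter (fun σ => 2 ≤ Dm T L σ n)).card :=
            Nat.mul_le_mul_right _ hAEv_card

end Core

section Measure

variable {Ω : Type*} [MeasureSpace Ω] [IsProbabilityMeasure (volume : Measure Ω)]
variable (Δ : ℤ → ℕ → Ω → ℤ)
variable (hmeas : ∀ z j, Measurable (Δ z j))
variable (hlaw : ∀ z j, Measure.map (Δ z j) (volume : Measure Ω) =
    (2⁻¹ : ℝ≥0∞) • Measure.dirac (1 : ℤ) + (2⁻¹ : ℝ≥0∞) • Measure.dirac (-1 : ℤ))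

include hmeas hlaw in
lemma prob_val {c : ℤ} (hc : c = 1 ∨ c = -1) (z : ℤ) (j : ℕ) :
    volume (Δ z j ⁻¹' {c}) = 2⁻¹ := by
  have h1 : volume (Δ z j ⁻¹' {c}) =
      Measure.map (Δ z j) (volume : Measure Ω) {c} := by
    rw [Measure.map_apply (hmeas z j) (measurableSet_singleton c)]
  rw [h1, hlaw z j]
  rcases hc with rfl | rfl <;>
    simp [Measure.dirac_apply' _ (measurableSet_singleton _), Set.indicator]

include hmeas hlaw in
lemma prob_not_pm (z : ℤ) (j : ℕ) :
    volume (Δ z j ⁻¹' ({-1, 1} : Set ℤ)ᶜ) = 0 := by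
  have h1 : volume (Δ z j ⁻¹' ({-1, 1} : Set ℤ)ᶜ) =
      Measure.map (Δ z j) (volume : Measure Ω) ({-1, 1} : Set ℤ)ᶜ := by
    rw [Measure.map_apply (hmeas z j) (MeasurableSet.compl (by measurability))]
  rw [h1, hlaw z j]
  have hm : MeasurableSet (({-1, 1} : Set ℤ)ᶜ) := MeasurableSet.compl (by measurability)
  simp only [Measure.add_apply, Measure.smul_apply, smul_eq_mul]
  rw [Measure.dirac_apply' _ hm, Measure.dirac_apply' _ hm]
  simp [Set.indicator]

/-- the cylinder event that the increments agree with the configuration `σ` on the window. -/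
def Ecyl (W : Finset (ℤ × ℕ)) (σ : Finset (ℤ × ℕ)) : Set Ω :=
  ⋂ w ∈ W, (fun ω => Δ w.1 w.2 ω) ⁻¹' {cf w.1 w.2 σ}

include hmeas in
lemma Ecyl_meas (W σ : Finset (ℤ × ℕ)) : MeasurableSet (Ecyl Δ W σ) := by
  apply Set.Finite.measurableSet_biInter (W.finite_toSet)
  intro w _
  exact (hmeas w.1 w.2) (measurableSet_singleton _)

include hmeas hlaw in
lemma Ecyl_prob (hindep : iIndepFun
    (fun p : ℤ × ℕ => Δ p.1 p.2) (volume : Measure Ω))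
    (W σ : Finset (ℤ × ℕ)) :
    volume (Ecyl Δ W σ) = (2⁻¹ : ℝ≥0∞) ^ W.card := by
  have h := hindep.measure_inter_preimage_eq_mul W
    (sets := fun w => {cf w.1 w.2 σ}) (fun w _ => measurableSet_singleton _)
  rw [Ecyl, h]
  rw [Finset.prod_congr rfl (fun w _ => prob_val Δ hmeas hlaw (cf_eq_or w.1 w.2 σ) w.1 w.2)]
  rw [Finset.prod_const]

include hmeas hlaw in
lemma OmegaW_compl_null (W : Finset (ℤ × ℕ)) :
    volume (⋂ w ∈ W, (fun ω => Δ w.1 w.2 ω) ⁻¹' ({-1, 1} : Set ℤ))ᶜ = 0 := by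
  rw [Set.compl_iInter₂]
  refine le_antisymm ?_ zero_le
  calc volume (⋃ w ∈ W, ((fun ω => Δ w.1 w.2 ω) ⁻¹' ({-1, 1} : Set ℤ))ᶜ)
      ≤ ∑ w ∈ W, volume (((fun ω => Δ w.1 w.2 ω) ⁻¹' ({-1, 1} : Set ℤ))ᶜ) :=
        measure_biUnion_finset_le W _
    _ = 0 := by
        rw [Finset.sum_eq_zero]
        intro w _
        rw [← Set.preimage_compl]
        exact prob_not_pm Δ hmeas hlaw w.1 w.2

include hmeas in
lemma walk_eq_CW {W : Finset (ℤ × ℕ)} {T : ℕ} {a : ℤ}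
    (hwin : ∀ (z : ℤ) (t : ℕ), t < T → |z - a| ≤ (t : ℤ) → (z, t) ∈ W)
    {σ : Finset (ℤ × ℕ)} {ω : Ω}
    (hω : ∀ w ∈ W, Δ w.1 w.2 ω = cf w.1 w.2 σ) :
    ∀ t, t ≤ T → walk Δ a ω t = CW σ a t := by
  intro t
  induction t with
  | zero => intro _; rfl
  | succ t ih =>
      intro ht
      have ht' : t < T := by omega
      have hIH := ih (by omega)
      show walk Δ a ω t + Δ (walk Δ a ω t) t ω = CW σ a (t + 1)
      rw [CW_succ, hIH]
      congr 1
      exact hω (CW σ a t, t) (hwin _ t ht' (CW_dist σ a t))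

lemma walk_good {W : Finset (ℤ × ℕ)} {T : ℕ} {a : ℤ}
    (hwin : ∀ (z : ℤ) (t : ℕ), t < T → |z - a| ≤ (t : ℤ) → (z, t) ∈ W)
    {ω : Ω} (hω : ∀ w ∈ W, Δ w.1 w.2 ω ∈ ({-1, 1} : Set ℤ)) :
    ∀ t, t ≤ T → |walk Δ a ω t - a| ≤ (t : ℤ) ∧ Even (walk Δ a ω t - a - t) := by
  intro t
  induction t with
  | zero => intro _; constructor <;> simp [walk]
  | succ t ih =>
      intro ht
      have ht' : t < T := by omega
      obtain ⟨h1, h2⟩ := ih (by omega)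
      have hmem : (walk Δ a ω t, t) ∈ W := hwin _ t ht' h1
      have hval := hω _ hmem
      simp only [Set.mem_insert_iff, Set.mem_singleton_iff] at hval
      have hwalk : walk Δ a ω (t + 1) = walk Δ a ω t + Δ (walk Δ a ω t) t ω := rfl
      constructor
      · rw [hwalk]
        rcases hval with h | h <;> rw [h] <;>
          (rw [abs_le] at h1 ⊢; push_cast at h1 ⊢; omega)
      · rw [hwalk]
        rcases h2 with ⟨c, hc⟩
        rcases hval with h | h <;> rw [h]
        · exact ⟨c - 1, by push_cast at hc ⊢; linarith⟩
        · exact ⟨c, by push_cast at hc ⊢; linarith⟩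

end Measure

end CRW

open CRW

/-- For coalescing simple symmetric random walks `X₁,…,Xₙ` started from ordered
initial positions, with `η_T` the number of distinct values among the `Xᵢ(T)`,
one has `P(η_T ≥ k+1) ≤ P(η_T ≥ k) ⬝ P(η_T ≥ 2)`. -/
theorem coalescing_walks_eta_submult {Ω : Type*} [MeasureSpace Ω]
    [IsProbabilityMeasure (volume : Measure Ω)]
    (Δ : ℤ → ℕ → Ω → ℤ)
    (hmeas : ∀ z j, Measurable (Δ z j))
    (hlaw : ∀ z j, Measure.map (Δ z j) (volume : Measure Ω) =
      (2⁻¹ : ℝ≥0∞) • Measure.dirac (1 : ℤ) + (2⁻¹ : ℝ≥0∞) • Measure.dirac (-1 : ℤ))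
    (hindep : iIndepFun
      (fun p : ℤ × ℕ => Δ p.1 p.2) (volume : Measure Ω))
    (n : ℕ) (l : Fin n → ℤ) (hl : StrictMono l) (T : ℕ)
    (η : Ω → ℕ)
    (hη : ∀ ω, η ω = (Finset.univ.image fun i : Fin n => walk Δ (l i) ω T).card)
    (k : ℕ) (hk : 1 ≤ k) :
    volume {ω | k + 1 ≤ η ω} ≤ volume {ω | k ≤ η ω} * volume {ω | 2 ≤ η ω} := by
  classical
  rcases Nat.eq_zero_or_pos n with hn0 | hn0
  · -- no walkers at all
    have hempty : {ω | k + 1 ≤ η ω} = ∅ := by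
      ext ω
      simp only [Set.mem_setOf_eq, Set.mem_empty_iff_false, iff_false, not_le]
      rw [hη ω]
      subst hn0
      simp only [Finset.univ_eq_empty, Finset.image_empty, Finset.card_empty]
      omega
    rw [hempty]
    simp
  -- there is at least one walker
  have hne : (Finset.univ.image l).Nonempty :=
    ⟨l ⟨0, hn0⟩, Finset.mem_image_of_mem l (Finset.mem_univ _)⟩
  obtain ⟨W, hwin⟩ : ∃ W : Finset (ℤ × ℕ),
      ∀ i : Fin n, ∀ (z : ℤ) (t : ℕ), t < T → |z - l i| ≤ (t : ℤ) → (z, t) ∈ W := by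
    refine ⟨(Finset.Icc ((Finset.univ.image l).min' hne - T)
      ((Finset.univ.image l).max' hne + T)) ×ˢ Finset.range T, ?_⟩
    intro i z t ht hz
    have h1 : (Finset.univ.image l).min' hne ≤ l i :=
      Finset.min'_le _ _ (Finset.mem_image_of_mem l (Finset.mem_univ i))
    have h2 : l i ≤ (Finset.univ.image l).max' hne :=
      Finset.le_max' _ _ (Finset.mem_image_of_mem l (Finset.mem_univ i))
    rw [Finset.mem_product, Finset.mem_Icc, Finset.mem_range]
    rw [abs_le] at hz
    have htT : (t : ℤ) ≤ (T : ℤ) := by exact_mod_cast le_of_lt ht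
    exact ⟨⟨by omega, by omega⟩, ht⟩
  set ΩW : Set Ω := ⋂ w ∈ W, (fun ω => Δ w.1 w.2 ω) ⁻¹' ({-1, 1} : Set ℤ) with hΩWdef
  have hΩWmeas : MeasurableSet ΩW := by
    apply Set.Finite.measurableSet_biInter (W.finite_toSet)
    intro w _
    exact (hmeas w.1 w.2) (by measurability)
  have hnull : volume ΩWᶜ = 0 := OmegaW_compl_null Δ hmeas hlaw W
  have hΩW1 : volume ΩW = 1 := (prob_compl_eq_zero_iff hΩWmeas).1 hnull
  by_cases hpar : ∀ i j : Fin n, Even (l i - l j)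
  swap
  · -- mixed parities: η ≥ 2 almost surely
    push_neg at hpar
    obtain ⟨i, j, hij⟩ := hpar
    have hsub2 : ΩW ⊆ {ω | 2 ≤ η ω} := by
      intro ω hω
      have hω' : ∀ w ∈ W, Δ w.1 w.2 ω ∈ ({-1, 1} : Set ℤ) := by
        intro w hw
        exact Set.mem_iInter₂.1 hω w hw
      have gi := (walk_good Δ (hwin i) hω' T le_rfl).2
      have gj := (walk_good Δ (hwin j) hω' T le_rfl).2
      have hnee : walk Δ (l i) ω T ≠ walk Δ (l j) ω T := by
        intro heq
        apply hij
        obtain ⟨c, hc⟩ := gi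
        obtain ⟨d, hd⟩ := gj
        exact ⟨d - c, by push_cast at hc hd ⊢; linarith⟩
      simp only [Set.mem_setOf_eq]
      rw [hη ω]
      have h2 : 1 < (Finset.univ.image fun i : Fin n => walk Δ (l i) ω T).card := by
        rw [Finset.one_lt_card]
        exact ⟨_, Finset.mem_image_of_mem _ (Finset.mem_univ i),
          _, Finset.mem_image_of_mem _ (Finset.mem_univ j), hnee⟩
      omega
    have h2vol : volume {ω | 2 ≤ η ω} = 1 :=
      le_antisymm prob_le_one (hΩW1 ▸ measure_mono hsub2)
    rw [h2vol, mul_one]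
    exact measure_mono (fun ω hω => by simp only [Set.mem_setOf_eq] at hω ⊢; omega)
  · -- all walkers have the same parity
    set L : ℕ → ℤ := fun i => l ⟨min i (n - 1), by omega⟩ with hL
    have hLi : ∀ (i : ℕ) (hi : i < n), L i = l ⟨i, hi⟩ := by
      intro i hi
      have hmin : min i (n - 1) = i := by omega
      simp only [hL]
      congr 1
      exact Fin.ext (by simp [hmin])
    have hmono : Monotone L := by
      intro a b hab
      exact hl.monotone (by simp only [Fin.mk_le_mk]; omega)
    have heven : ∀ i j, Even (L i - L j) := fun i j => hpar _ _
    have hWn : ∀ i, i < n → ∀ (z : ℤ) (t : ℕ), t < T → |z - L i| ≤ (t : ℤ) → (z, t) ∈ W := by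
      intro i hi z t ht hz
      rw [hLi i hi] at hz
      exact hwin ⟨i, hi⟩ z t ht hz
    -- the measure of each level set is computed by counting configurations
    have hη_eq : ∀ (σ : Finset (ℤ × ℕ)) (ω : Ω),
        (∀ w ∈ W, Δ w.1 w.2 ω = cf w.1 w.2 σ) → η ω = Dm T L σ n := by
      intro σ ω hcf
      rw [hη ω]
      unfold Dm
      congr 1
      ext z
      simp only [Finset.mem_image, Finset.mem_range, Finset.mem_univ, true_and]
      constructor
      · rintro ⟨i, rfl⟩
        refine ⟨i.val, i.isLt, ?_⟩
        unfold ep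
        rw [hLi i.val i.isLt]
        have := walk_eq_CW Δ hmeas (hwin ⟨i.val, i.isLt⟩) hcf T le_rfl
        rw [← this]
      · rintro ⟨i, hi, rfl⟩
        refine ⟨⟨i, hi⟩, ?_⟩
        unfold ep
        rw [hLi i hi]
        exact walk_eq_CW Δ hmeas (hwin ⟨i, hi⟩) hcf T le_rfl
    have hkey : ∀ j : ℕ, volume {ω | j ≤ η ω} =
        ((W.powerset.filter (fun σ => j ≤ Dm T L σ n)).card : ℝ≥0∞) * (2⁻¹) ^ W.card := by
      intro j
      set G := W.powerset.filter (fun σ => j ≤ Dm T L σ n) with hG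
      have hcup : {ω | j ≤ η ω} ∩ ΩW = ⋃ σ ∈ G, Ecyl Δ W σ := by
        ext ω
        simp only [Set.mem_inter_iff, Set.mem_setOf_eq, Set.mem_iUnion]
        constructor
        · rintro ⟨hS, hΩ⟩
          have hω' : ∀ w ∈ W, Δ w.1 w.2 ω ∈ ({-1, 1} : Set ℤ) := by
            intro w hw
            exact Set.mem_iInter₂.1 hΩ w hw
          set σω := W.filter (fun w => Δ w.1 w.2 ω = 1) with hσω
          have hcf : ∀ w ∈ W, Δ w.1 w.2 ω = cf w.1 w.2 σω := by
            intro w hw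
            show Δ w.1 w.2 ω = if w ∈ σω then 1 else -1
            have hmemiff : (w ∈ σω) ↔ Δ w.1 w.2 ω = 1 := by
              rw [hσω, Finset.mem_filter]
              exact ⟨fun h => h.2, fun h => ⟨hw, h⟩⟩
            by_cases h1 : Δ w.1 w.2 ω = 1
            · rw [if_pos (hmemiff.2 h1)]
              exact h1
            · have h2 := hω' w hw
              simp only [Set.mem_insert_iff, Set.mem_singleton_iff] at h2
              rw [if_neg (fun hm => h1 (hmemiff.1 hm))]
              tauto
          refine ⟨σω, ?_, ?_⟩
          · rw [hG, Finset.mem_filter]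
            refine ⟨Finset.mem_powerset.2 (Finset.filter_subset _ _), ?_⟩
            rw [← hη_eq σω ω hcf]
            exact hS
          · rw [Ecyl, Set.mem_iInter₂]
            intro w hw
            simp only [Set.mem_preimage, Set.mem_singleton_iff]
            exact hcf w hw
        · rintro ⟨σ, hσG, hωE⟩
          have hcf : ∀ w ∈ W, Δ w.1 w.2 ω = cf w.1 w.2 σ := by
            intro w hw
            have := Set.mem_iInter₂.1 hωE w hw
            simpa using this
          constructor
          · rw [hη_eq σ ω hcf]
            rw [hG, Finset.mem_filter] at hσG
            exact hσG.2
          · rw [hΩWdef, Set.mem_iInter₂]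
            intro w hw
            simp only [Set.mem_preimage]
            rw [hcf w hw]
            rcases cf_eq_or w.1 w.2 σ with h | h <;> rw [h] <;> simp
      have hdisj : (↑G : Set (Finset (ℤ × ℕ))).PairwiseDisjoint (Ecyl Δ W) := by
        intro σ hσ τ hτ hnee
        rw [Finset.mem_coe, hG, Finset.mem_filter, Finset.mem_powerset] at hσ hτ
        have hσW : σ ⊆ W := hσ.1
        have hτW : τ ⊆ W := hτ.1
        have hw : ∃ w, (w ∈ σ ∧ w ∉ τ) ∨ (w ∈ τ ∧ w ∉ σ) := by
          by_contra hcon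
          push_neg at hcon
          apply hnee
          ext w
          have := hcon w
          tauto
        obtain ⟨w, hw⟩ := hw
        have hwW : w ∈ W := by
          rcases hw with ⟨h1, _⟩ | ⟨h1, _⟩
          exacts [hσW h1, hτW h1]
        have hcfne : cf w.1 w.2 σ ≠ cf w.1 w.2 τ := by
          unfold cf
          rcases hw with ⟨h1, h2⟩ | ⟨h1, h2⟩
          · rw [if_pos h1, if_neg h2]; omega
          · rw [if_neg h2, if_pos h1]; omega
        simp only [Function.onFun]
        rw [Set.disjoint_left]
        intro ω hω1 hω2
        have e1 := Set.mem_iInter₂.1 hω1 w hwW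
        have e2 := Set.mem_iInter₂.1 hω2 w hwW
        simp only [Set.mem_preimage, Set.mem_singleton_iff] at e1 e2
        exact hcfne (e1 ▸ e2 ▸ rfl)
      have hvol2 : volume (⋃ σ ∈ G, Ecyl Δ W σ) = (G.card : ℝ≥0∞) * (2⁻¹) ^ W.card := by
        rw [measure_biUnion_finset hdisj (fun σ _ => Ecyl_meas Δ hmeas W σ)]
        rw [Finset.sum_congr rfl (fun σ _ => Ecyl_prob Δ hmeas hlaw hindep W σ)]
        rw [Finset.sum_const, nsmul_eq_mul]
      have hSvol : volume {ω | j ≤ η ω} = volume ({ω | j ≤ η ω} ∩ ΩW) := by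
        refine le_antisymm ?_ (measure_mono Set.inter_subset_left)
        calc volume {ω | j ≤ η ω}
            ≤ volume ({ω | j ≤ η ω} ∩ ΩW) + volume ({ω | j ≤ η ω} \ ΩW) :=
              measure_le_inter_add_diff _ _ _
          _ ≤ volume ({ω | j ≤ η ω} ∩ ΩW) + volume ΩWᶜ := by
              gcongr
              exact Set.diff_subset_compl _ _
          _ = volume ({ω | j ≤ η ω} ∩ ΩW) := by rw [hnull, add_zero]
      rw [hSvol, hcup, hvol2]
    -- now transfer the combinatorial inequality
    have hcube := cube_core hmono heven hWn hk hn0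
    rw [hkey (k + 1), hkey k, hkey 2]
    set N := W.card with hN
    set c1 := (W.powerset.filter (fun σ => k + 1 ≤ Dm T L σ n)).card with hc1
    set ck := (W.powerset.filter (fun σ => k ≤ Dm T L σ n)).card with hck
    set c2 := (W.powerset.filter (fun σ => 2 ≤ Dm T L σ n)).card with hc2
    have hcast : (c1 : ℝ≥0∞) * 2 ^ N ≤ (ck : ℝ≥0∞) * (c2 : ℝ≥0∞) := by
      have := hcube
      have h2 : ((c1 * 2 ^ N : ℕ) : ℝ≥0∞) ≤ ((ck * c2 : ℕ) : ℝ≥0∞) := Nat.cast_le.2 this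
      push_cast at h2
      exact h2
    have hpow_ne_zero : ((2 : ℝ≥0∞) ^ N) ≠ 0 := by positivity
    have hpow_ne_top : ((2 : ℝ≥0∞) ^ N) ≠ ⊤ := by
      exact ENNReal.pow_ne_top (by norm_num)
    have hinv : ((2 : ℝ≥0∞)⁻¹) ^ N = ((2 : ℝ≥0∞) ^ N)⁻¹ := ENNReal.inv_pow.symm
    rw [hinv]
    calc (c1 : ℝ≥0∞) * ((2 : ℝ≥0∞) ^ N)⁻¹
        = ((c1 : ℝ≥0∞) * 2 ^ N) * (((2 : ℝ≥0∞) ^ N)⁻¹ * ((2 : ℝ≥0∞) ^ N)⁻¹) := by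
          rw [show ((c1 : ℝ≥0∞) * 2 ^ N) * (((2 : ℝ≥0∞) ^ N)⁻¹ * ((2 : ℝ≥0∞) ^ N)⁻¹)
              = (c1 : ℝ≥0∞) * ((2 : ℝ≥0∞) ^ N * ((2 : ℝ≥0∞) ^ N)⁻¹) * ((2 : ℝ≥0∞) ^ N)⁻¹ by
            ring]
          rw [ENNReal.mul_inv_cancel hpow_ne_zero hpow_ne_top, mul_one]
      _ ≤ ((ck : ℝ≥0∞) * (c2 : ℝ≥0∞)) * (((2 : ℝ≥0∞) ^ N)⁻¹ * ((2 : ℝ≥0∞) ^ N)⁻¹) := by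
          exact mul_le_mul_left hcast _
      _ = (ck : ℝ≥0∞) * ((2 : ℝ≥0∞) ^ N)⁻¹ * ((c2 : ℝ≥0∞) * ((2 : ℝ≥0∞) ^ N)⁻¹) := by
          ring
end
end
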